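/- arXiv:2111.03794 — 3 statements merged into one kernel-verified Lean document; each statement's English description precedes it below -/
import Mathlib

section
/- Reverse-direction symmetrization inequality: E_{z ∼ μ^{⊗N}}[ sup_{g ∈ ι} ( L_N(g)(z) − L(g) ) ] ≤ 2·C(N). -/
open MeasureTheory

noncomputable section

variable {Z : Type*} [MeasurableSpace Z] {ι : Type*}

/-- The empirical loss of hypothesis `g` on the sample `z` of size `N`:
`L_N(g)(z) = (1/N) ∑ᵢ f g (z i)`. -/
def empLoss (f : ι → Z → ℝ) (N : ℕ) (g : ι) (z : Fin N → Z) : ℝ :=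
  (1 / N) * ∑ i, f g (z i)

/-- The expected loss of hypothesis `g`: `L(g) = ∫ f g dμ`. -/
def expLoss (μ : Measure Z) (f : ι → Z → ℝ) (g : ι) : ℝ :=
  ∫ x, f g x ∂μ

/-- A Rademacher sign `±1` encoded by a Boolean. -/
def rsign (b : Bool) : ℝ := if b then 1 else -1

/-- The fair-coin measure on `Bool`, i.e. the distribution of one Rademacher sign. -/
def coinFlip : Measure Bool := (PMF.uniformOfFintype Bool).toMeasure

/-- The Rademacher complexity of the class `ι` (composed with the loss `f`) with `N` samples:
`C(N) = E_{z ~ μ^N, ξ ~ Unif{±1}^N} [ sup_{g ∈ ι} (1/N) ∑ᵢ ξᵢ f g (zᵢ) ]`. -/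
def radComplexity (μ : Measure Z) (f : ι → Z → ℝ) (N : ℕ) : ℝ :=
  ∫ p : (Fin N → Z) × (Fin N → Bool),
    ⨆ g : ι, (1 / N) * ∑ i, rsign (p.2 i) * f g (p.1 i)
    ∂((Measure.pi fun _ => μ).prod (Measure.pi fun _ => coinFlip))

lemma aux_mean_abs_le {N : ℕ} (a : Fin N → ℝ) (h : ∀ i, |a i| ≤ 1) :
    |(1 / (N : ℝ)) * ∑ i, a i| ≤ 1 := by
  rcases Nat.eq_zero_or_pos N with h0 | h0
  · subst h0; simp
  have hN : (0 : ℝ) < N := by exact_mod_cast h0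
  have h1 : |∑ i, a i| ≤ (N : ℝ) := by
    calc |∑ i, a i| ≤ ∑ i, |a i| := Finset.abs_sum_le_sum_abs _ _
      _ ≤ ∑ _i : Fin N, (1 : ℝ) := Finset.sum_le_sum fun i _ => h i
      _ = N := by simp
  rw [abs_mul, abs_of_nonneg (by positivity : (0:ℝ) ≤ 1 / N)]
  calc (1 / (N:ℝ)) * |∑ i, a i| ≤ (1 / (N:ℝ)) * N := by gcongr
    _ = 1 := by field_simp

lemma aux_integrable {α : Type*} [MeasurableSpace α] {m : Measure α} [IsFiniteMeasure m]
    {F : α → ℝ} (hm : Measurable F) (hb : ∀ x, |F x| ≤ 1) : Integrable F m :=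
  (integrable_const 1).mono' hm.aestronglyMeasurable (ae_of_all _ fun x => by simpa using hb x)

lemma aux_bddAbove {ι : Type*} {F : ι → ℝ} (hb : ∀ g, F g ≤ 1) : BddAbove (Set.range F) :=
  ⟨1, by rintro _ ⟨g, rfl⟩; exact hb g⟩

lemma aux_sup_abs_le {ι : Type*} [Nonempty ι] {F : ι → ℝ}
    (hb : ∀ g, |F g| ≤ 1) : |⨆ g, F g| ≤ 1 := by
  rw [abs_le]
  have bdd : BddAbove (Set.range F) := aux_bddAbove fun g => (abs_le.1 (hb g)).2
  refine ⟨?_, ciSup_le fun g => (abs_le.1 (hb g)).2⟩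
  obtain ⟨g⟩ := ‹Nonempty ι›
  exact le_trans (abs_le.1 (hb g)).1 (le_ciSup bdd g)

lemma aux_diff_abs {a b : ℝ} (ha : a ∈ Set.Icc (0:ℝ) 1) (hb : b ∈ Set.Icc (0:ℝ) 1) :
    |a - b| ≤ 1 := by
  rw [abs_le]; obtain ⟨h1, h2⟩ := ha; obtain ⟨h3, h4⟩ := hb; constructor <;> linarith

lemma aux_mean_mem {N : ℕ} (a : Fin N → ℝ) (h : ∀ i, a i ∈ Set.Icc (0:ℝ) 1) :
    (1 / (N : ℝ)) * ∑ i, a i ∈ Set.Icc (0:ℝ) 1 := by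
  constructor
  · exact mul_nonneg (by positivity) (Finset.sum_nonneg fun i _ => (h i).1)
  · rcases Nat.eq_zero_or_pos N with h0 | h0
    · subst h0; simp
    have hN : (0 : ℝ) < N := by exact_mod_cast h0
    calc (1 / (N:ℝ)) * ∑ i, a i ≤ (1 / (N:ℝ)) * ∑ _i : Fin N, (1:ℝ) :=
          mul_le_mul_of_nonneg_left (Finset.sum_le_sum fun i _ => (h i).2) (by positivity)
      _ = 1 := by simp; field_simp

lemma coinFlip_map_not : Measure.map Bool.not coinFlip = coinFlip := by
  have hm : Measurable Bool.not := measurable_from_top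
  ext s hs
  rw [Measure.map_apply hm hs, coinFlip,
    PMF.toMeasure_apply _ hs, PMF.toMeasure_apply _ (hm hs),
    tsum_fintype, tsum_fintype, Fintype.sum_bool, Fintype.sum_bool]
  by_cases h1 : true ∈ s <;> by_cases h2 : false ∈ s <;>
    simp [Set.indicator, Set.mem_preimage, h1, h2, add_comm]

set_option maxHeartbeats 1000000 in
/-- **Reverse-direction symmetrization inequality**:
`E_{z ~ μ^{⊗N}} [ sup_{g ∈ ι} (L_N(g)(z) - L(g)) ] ≤ 2 C(N)`. -/
theorem symmetrization_reverse
    (μ : Measure Z) [IsProbabilityMeasure μ] [Countable ι] [Nonempty ι]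
    (f : ι → Z → ℝ) (hmeas : ∀ g, Measurable (f g))
    (hbound : ∀ g x, f g x ∈ Set.Icc (0 : ℝ) 1)
    (N : ℕ) (hN : 0 < N) :
    (∫ z, (⨆ g : ι, empLoss f N g z - expLoss μ f g)
        ∂(Measure.pi fun _ : Fin N => μ))
      ≤ 2 * radComplexity μ f N := by
  classical
  haveI : IsProbabilityMeasure coinFlip := PMF.toMeasure.isProbabilityMeasure _
  set P : Measure (Fin N → Z) := Measure.pi fun _ : Fin N => μ with hPdef
  set B : Measure (Fin N → Bool) := Measure.pi fun _ : Fin N => coinFlip with hBdef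
  haveI hPprob : IsProbabilityMeasure P := by rw [hPdef]; infer_instance
  haveI hBprob : IsProbabilityMeasure B := by rw [hBdef]; infer_instance
  set PP : Measure ((Fin N → Z) × (Fin N → Z)) := P.prod P with hPPdef
  haveI : IsProbabilityMeasure PP := by rw [hPPdef]; infer_instance
  -- basic bounds
  have habs : ∀ g x, |f g x| ≤ 1 := fun g x =>
    abs_le.2 ⟨by linarith [(hbound g x).1], (hbound g x).2⟩
  have hrsign_abs : ∀ b, |rsign b| ≤ 1 := by intro b; cases b <;> simp [rsign]
  -- empirical loss: measurability and bounds
  have hempMeas : ∀ g, Measurable (empLoss f N g) := fun g =>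
    measurable_const.mul
      (Finset.measurable_sum _ fun i _ => (hmeas g).comp (measurable_pi_apply i))
  have hemp01 : ∀ g z, empLoss f N g z ∈ Set.Icc (0:ℝ) 1 := fun g z =>
    aux_mean_mem _ fun i => hbound g (z i)
  have hempAbs : ∀ g z, |empLoss f N g z| ≤ 1 := fun g z =>
    aux_diff_abs (hemp01 g z) ⟨le_refl 0, zero_le_one⟩ |>.trans_eq' (by ring_nf)
  have hexp01 : ∀ g, expLoss μ f g ∈ Set.Icc (0:ℝ) 1 := by
    intro g
    constructor
    · exact integral_nonneg fun x => (hbound g x).1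
    · calc expLoss μ f g ≤ ∫ _x, (1:ℝ) ∂μ :=
            integral_mono (aux_integrable (hmeas g) (habs g)) (integrable_const 1)
              fun x => (hbound g x).2
        _ = 1 := by simp
  -- eval is measure preserving
  have hEval : ∀ i : Fin N, MeasurePreserving (fun z : Fin N → Z => z i) P μ := by
    intro i
    refine ⟨measurable_pi_apply i, ?_⟩
    ext s hs
    rw [Measure.map_apply (measurable_pi_apply i) hs]
    have hpre : (fun z : Fin N → Z => z i) ⁻¹' s =
        Set.pi Set.univ (Function.update (fun _ : Fin N => Set.univ) i s) :=
      Set.eval_preimage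
    rw [hPdef, hpre, Measure.pi_pi]
    rw [Finset.prod_eq_single i (fun j _ hj => by simp [Function.update_of_ne hj])
      (by simp)]
    simp
  -- expLoss as average of empLoss
  have hexpInt : ∀ g, expLoss μ f g = ∫ z, empLoss f N g z ∂P := by
    intro g
    have h1 : ∫ z, empLoss f N g z ∂P = (1 / (N:ℝ)) * ∑ i, ∫ z, f g (z i) ∂P := by
      simp only [empLoss]
      rw [integral_const_mul]
      congr 1
      exact integral_finset_sum _ fun i _ =>
        aux_integrable ((hmeas g).comp (measurable_pi_apply i)) fun z => habs g (z i)
    have h2 : ∀ i : Fin N, ∫ z, f g (z i) ∂P = expLoss μ f g := by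
      intro i
      have := integral_map (μ := P) (hEval i).measurable.aemeasurable
        (hmeas g).aestronglyMeasurable
      rw [(hEval i).map_eq] at this
      exact this.symm
    rw [h1]
    simp only [h2, Finset.sum_const, Finset.card_univ, Fintype.card_fin, nsmul_eq_mul]
    have hNne : (N:ℝ) ≠ 0 := Nat.cast_ne_zero.2 hN.ne'
    field_simp
  -- the symmetrized difference functional
  set Φ : (Fin N → Z) × (Fin N → Z) → ℝ :=
    fun p => ⨆ g, (empLoss f N g p.1 - empLoss f N g p.2) with hΦdef
  have hΦmeas : Measurable Φ :=
    Measurable.iSup fun g =>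
      ((hempMeas g).comp measurable_fst).sub ((hempMeas g).comp measurable_snd)
  have hΦabs : ∀ p, |Φ p| ≤ 1 := fun p =>
    aux_sup_abs_le fun g => aux_diff_abs (hemp01 g p.1) (hemp01 g p.2)
  have hΦint : Integrable Φ PP := aux_integrable hΦmeas hΦabs
  -- Step B : LHS ≤ ∫ Φ d(P × P)
  have stepB : (∫ z, (⨆ g : ι, empLoss f N g z - expLoss μ f g) ∂P) ≤ ∫ p, Φ p ∂PP := by
    rw [hPPdef, integral_prod _ (hPPdef ▸ hΦint)]
    refine integral_mono
      (aux_integrable (Measurable.iSup fun g => (hempMeas g).sub measurable_const)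
        (fun z => aux_sup_abs_le fun g => aux_diff_abs (hemp01 g z) (hexp01 g)))
      (hPPdef ▸ hΦint).integral_prod_left ?_
    intro z
    refine ciSup_le fun g => ?_
    have h1 : empLoss f N g z - expLoss μ f g
        = ∫ z', (empLoss f N g z - empLoss f N g z') ∂P := by
      rw [integral_sub (integrable_const _)
        (aux_integrable (hempMeas g) (hempAbs g)), integral_const]
      simp [hexpInt g]
    rw [h1]
    refine integral_mono
      ((integrable_const _).sub (aux_integrable (hempMeas g) (hempAbs g)))
      (aux_integrable (hΦmeas.comp measurable_prodMk_left) fun z' => hΦabs _) ?_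
    intro z'
    exact le_ciSup (aux_bddAbove fun g' =>
      (abs_le.1 (aux_diff_abs (hemp01 g' z) (hemp01 g' z'))).2) g
  -- the sign-symmetrized functional
  set Ψ : ((Fin N → Z) × (Fin N → Z)) × (Fin N → Bool) → ℝ :=
    fun q => ⨆ g, (1 / (N:ℝ)) * ∑ i, rsign (q.2 i) * (f g (q.1.1 i) - f g (q.1.2 i))
    with hΨdef
  have hrsignMeas : Measurable rsign := measurable_from_top
  have hΨmeas : Measurable Ψ :=
    Measurable.iSup fun g => measurable_const.mul <|
      Finset.measurable_sum _ fun i _ =>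
        ((hrsignMeas.comp ((measurable_pi_apply i).comp measurable_snd)).mul
          (((hmeas g).comp ((measurable_pi_apply i).comp
              (measurable_fst.comp measurable_fst))).sub
            ((hmeas g).comp ((measurable_pi_apply i).comp
              (measurable_snd.comp measurable_fst)))))
  have hΨabs : ∀ q, |Ψ q| ≤ 1 := by
    intro q
    refine aux_sup_abs_le fun g => aux_mean_abs_le _ fun i => ?_
    rw [abs_mul]
    exact mul_le_one₀ (hrsign_abs _) (abs_nonneg _)
      (aux_diff_abs (hbound g _) (hbound g _))
  have hΨint : Integrable Ψ (PP.prod B) := aux_integrable hΨmeas hΨabs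
  -- Step C : for every fixed sign vector b, swapping is measure preserving
  have hswap : ∀ b : Fin N → Bool, ∫ p, Ψ (p, b) ∂PP = ∫ p, Φ p ∂PP := by
    intro b
    set e := MeasurableEquiv.arrowProdEquivProdArrow Z Z (Fin N) with hedef
    have he : MeasurePreserving e (Measure.pi fun _ : Fin N => μ.prod μ) PP := by
      rw [hPPdef, hPdef]
      exact measurePreserving_arrowProdEquivProdArrow Z Z (Fin N) (fun _ => μ) (fun _ => μ)
    have hw1 : ∀ i : Fin N, MeasurePreserving
        (fun x : Z × Z => if b i then x else Prod.swap x) (μ.prod μ) (μ.prod μ) := by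
      intro i
      by_cases hbi : b i
      · rw [show (fun x : Z × Z => if b i then x else Prod.swap x) = id from
          funext fun x => by simp [hbi]]
        exact MeasurePreserving.id (μ.prod μ)
      · simpa [hbi] using Measure.measurePreserving_swap (μ := μ) (ν := μ)
    have hw : MeasurePreserving
        (fun (q : Fin N → Z × Z) i => if b i then q i else Prod.swap (q i))
        (Measure.pi fun _ : Fin N => μ.prod μ) (Measure.pi fun _ : Fin N => μ.prod μ) :=
      measurePreserving_pi (fun _ : Fin N => μ.prod μ) (fun _ : Fin N => μ.prod μ) hw1
    have hs : MeasurePreserving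
        (fun p : (Fin N → Z) × (Fin N → Z) =>
          e (fun i => if b i then e.symm p i else Prod.swap (e.symm p i))) PP PP :=
      he.comp (hw.comp (he.symm e))
    have key : ∀ p : (Fin N → Z) × (Fin N → Z),
        Φ (e (fun i => if b i then e.symm p i else Prod.swap (e.symm p i))) = Ψ (p, b) := by
      intro p
      have h1 : e (fun i => if b i then e.symm p i else Prod.swap (e.symm p i)) =
          ((fun i => if b i then p.1 i else p.2 i),
           (fun i => if b i then p.2 i else p.1 i)) := by
        simp only [hedef, MeasurableEquiv.arrowProdEquivProdArrow,
          Equiv.arrowProdEquivProdArrow, MeasurableEquiv.coe_mk, Equiv.coe_fn_mk,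
          MeasurableEquiv.symm, Equiv.coe_fn_symm_mk]
        refine Prod.ext ?_ ?_ <;> funext i <;> by_cases hbi : b i <;>
          simp [hbi, Prod.swap]
      rw [h1]
      simp only [hΦdef, hΨdef, empLoss]
      refine iSup_congr fun g => ?_
      rw [← mul_sub, ← Finset.sum_sub_distrib]
      congr 1
      refine Finset.sum_congr rfl fun i _ => ?_
      by_cases hbi : b i <;> simp [hbi, rsign]
    have hInt := integral_map (μ := PP) (f := Φ) hs.measurable.aemeasurable
      hΦmeas.aestronglyMeasurable
    rw [hs.map_eq] at hInt
    calc ∫ p, Ψ (p, b) ∂PP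
        = ∫ p, Φ (e (fun i => if b i then e.symm p i else Prod.swap (e.symm p i))) ∂PP := by
          exact integral_congr_ae (ae_of_all _ fun p => (key p).symm)
      _ = ∫ p, Φ p ∂PP := hInt.symm
  -- average over the signs
  have hC : ∫ q, Ψ q ∂(PP.prod B) = ∫ p, Φ p ∂PP := by
    rw [integral_prod_symm _ hΨint]
    simp only [hswap]
    simp
  -- Step D : split the supremum
  set A1 : ((Fin N → Z) × (Fin N → Z)) × (Fin N → Bool) → ℝ :=
    fun q => ⨆ g, (1 / (N:ℝ)) * ∑ i, rsign (q.2 i) * f g (q.1.1 i) with hA1def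
  set A2 : ((Fin N → Z) × (Fin N → Z)) × (Fin N → Bool) → ℝ :=
    fun q => ⨆ g, (1 / (N:ℝ)) * ∑ i, rsign (!(q.2 i)) * f g (q.1.2 i) with hA2def
  have hterm_abs : ∀ (b : Bool) (g : ι) (x : Z), |rsign b * f g x| ≤ 1 := by
    intro b g x
    rw [abs_mul]
    exact mul_le_one₀ (hrsign_abs _) (abs_nonneg _) (habs g x)
  have hA1meas : Measurable A1 :=
    Measurable.iSup fun g => measurable_const.mul <|
      Finset.measurable_sum _ fun i _ =>
        (hrsignMeas.comp ((measurable_pi_apply i).comp measurable_snd)).mul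
          ((hmeas g).comp ((measurable_pi_apply i).comp
            (measurable_fst.comp measurable_fst)))
  have hA2meas : Measurable A2 :=
    Measurable.iSup fun g => measurable_const.mul <|
      Finset.measurable_sum _ fun i _ =>
        (((measurable_from_top : Measurable fun x : Bool => rsign (!x)).comp
            ((measurable_pi_apply i).comp measurable_snd)).mul
          ((hmeas g).comp ((measurable_pi_apply i).comp
            (measurable_snd.comp measurable_fst))))
  have hA1abs : ∀ q, |A1 q| ≤ 1 := fun q =>
    aux_sup_abs_le fun g => aux_mean_abs_le _ fun i => hterm_abs _ _ _
  have hA2abs : ∀ q, |A2 q| ≤ 1 := fun q =>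
    aux_sup_abs_le fun g => aux_mean_abs_le _ fun i => hterm_abs _ _ _
  have hA1int : Integrable A1 (PP.prod B) := aux_integrable hA1meas hA1abs
  have hA2int : Integrable A2 (PP.prod B) := aux_integrable hA2meas hA2abs
  have hrsign_not : ∀ b : Bool, rsign (!b) = - rsign b := by
    intro b; cases b <;> simp [rsign]
  have hptwise : ∀ q, Ψ q ≤ A1 q + A2 q := by
    intro q
    refine ciSup_le fun g => ?_
    have e1 : (1/(N:ℝ)) * ∑ i, rsign (q.2 i) * (f g (q.1.1 i) - f g (q.1.2 i))
        = ((1/(N:ℝ)) * ∑ i, rsign (q.2 i) * f g (q.1.1 i))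
          + ((1/(N:ℝ)) * ∑ i, rsign (!(q.2 i)) * f g (q.1.2 i)) := by
      rw [← mul_add, ← Finset.sum_add_distrib]
      congr 1
      refine Finset.sum_congr rfl fun i _ => ?_
      rw [hrsign_not]
      ring
    rw [e1]
    have le1 : (1/(N:ℝ)) * ∑ i, rsign (q.2 i) * f g (q.1.1 i) ≤ A1 q := by
      simp only [hA1def]
      exact le_ciSup (aux_bddAbove
        (F := fun g' : ι => (1/(N:ℝ)) * ∑ i, rsign (q.2 i) * f g' (q.1.1 i))
        fun g' => (abs_le.1 (aux_mean_abs_le _ fun i => hterm_abs _ _ _)).2) g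
    have le2 : (1/(N:ℝ)) * ∑ i, rsign (!(q.2 i)) * f g (q.1.2 i) ≤ A2 q := by
      simp only [hA2def]
      exact le_ciSup (aux_bddAbove
        (F := fun g' : ι => (1/(N:ℝ)) * ∑ i, rsign (!(q.2 i)) * f g' (q.1.2 i))
        fun g' => (abs_le.1 (aux_mean_abs_le _ fun i => hterm_abs _ _ _)).2) g
    exact add_le_add le1 le2
  have hstepD : ∫ q, Ψ q ∂(PP.prod B)
      ≤ (∫ q, A1 q ∂(PP.prod B)) + ∫ q, A2 q ∂(PP.prod B) := by
    rw [← integral_add hA1int hA2int]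
    exact integral_mono hΨint (hA1int.add hA2int) hptwise
  -- identify the two pieces with the Rademacher complexity
  set R : (Fin N → Z) × (Fin N → Bool) → ℝ :=
    fun p => ⨆ g, (1/(N:ℝ)) * ∑ i, rsign (p.2 i) * f g (p.1 i) with hRdef
  have hRmeas : Measurable R :=
    Measurable.iSup fun g => measurable_const.mul <|
      Finset.measurable_sum _ fun i _ =>
        (hrsignMeas.comp ((measurable_pi_apply i).comp measurable_snd)).mul
          ((hmeas g).comp ((measurable_pi_apply i).comp measurable_fst))
  have hRC : radComplexity μ f N = ∫ p, R p ∂(P.prod B) := by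
    rw [radComplexity, hPdef, hBdef]
  have hfstP : MeasurePreserving (Prod.fst : (Fin N → Z) × (Fin N → Z) → (Fin N → Z)) PP P :=
    ⟨measurable_fst, by simp [hPPdef, Measure.map_fst_prod]⟩
  have hsndP : MeasurePreserving (Prod.snd : (Fin N → Z) × (Fin N → Z) → (Fin N → Z)) PP P :=
    ⟨measurable_snd, by simp [hPPdef, Measure.map_snd_prod]⟩
  have hnotB : MeasurePreserving (fun b : Fin N → Bool => fun i => !(b i)) B B := by
    rw [hBdef]
    exact measurePreserving_pi _ _ fun i => ⟨measurable_from_top, coinFlip_map_not⟩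
  have hRad1 : ∫ q, A1 q ∂(PP.prod B) = radComplexity μ f N := by
    have hmp : MeasurePreserving (Prod.map (Prod.fst) (id : (Fin N → Bool) → _))
        (PP.prod B) (P.prod B) := hfstP.prod (MeasurePreserving.id B)
    have hInt := integral_map (μ := PP.prod B) (f := R) hmp.measurable.aemeasurable
      hRmeas.aestronglyMeasurable
    rw [hmp.map_eq] at hInt
    rw [hRC, hInt]
    exact integral_congr_ae (ae_of_all _ fun q => rfl)
  have hRad2 : ∫ q, A2 q ∂(PP.prod B) = radComplexity μ f N := by
    have hmp : MeasurePreserving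
        (Prod.map (Prod.snd) (fun b : Fin N → Bool => fun i => !(b i)))
        (PP.prod B) (P.prod B) := hsndP.prod hnotB
    have hInt := integral_map (μ := PP.prod B) (f := R) hmp.measurable.aemeasurable
      hRmeas.aestronglyMeasurable
    rw [hmp.map_eq] at hInt
    rw [hRC, hInt]
    exact integral_congr_ae (ae_of_all _ fun q => rfl)
  calc (∫ z, (⨆ g : ι, empLoss f N g z - expLoss μ f g) ∂P)
      ≤ ∫ p, Φ p ∂PP := stepB
    _ = ∫ q, Ψ q ∂(PP.prod B) := hC.symm
    _ ≤ (∫ q, A1 q ∂(PP.prod B)) + ∫ q, A2 q ∂(PP.prod B) := hstepD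
    _ = 2 * radComplexity μ f N := by rw [hRad1, hRad2]; ring
end
end

section
/- Uniform generalization bound: for i.i.d. samples z₁,…,z_N ∼ μ and any δ ∈ (0,1), with probability at least 1 − δ, simultaneously for all g ∈ ι: L(g) ≤ L_N(g)(z) + 2·C(N) + √( log(1/δ) / (2N) ). -/
open MeasureTheory

noncomputable section

variable {Z : Type*} [MeasurableSpace Z] {ι : Type*}

lemma hoeffding_core (p : ℝ) (hp0 : 0 ≤ p) (hp1 : p ≤ 1) (u : ℝ) :
    -p*u + Real.log (1 - p + p * Real.exp u) ≤ u^2/8 := by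
  set D : ℝ → ℝ := fun u => 1 - p + p * Real.exp u with hDdef
  have hD : ∀ v : ℝ, 0 < D v := by
    intro v
    have h1 := Real.exp_pos v
    have h2 : 1 ≤ Real.exp 0 := by simp
    rcases lt_or_eq_of_le hp1 with h | h
    · have : 0 < 1 - p := by linarith
      have : 0 ≤ p * Real.exp v := mul_nonneg hp0 h1.le
      simp only [hDdef]; nlinarith
    · simp only [hDdef, ← h]; nlinarith
  have hDd : ∀ v : ℝ, HasDerivAt D (p * Real.exp v) v := by
    intro v
    exact ((Real.hasDerivAt_exp v).const_mul p).const_add (1 - p)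
  -- φ and its derivatives
  set φ : ℝ → ℝ := fun u => -p*u + Real.log (D u) with hφdef
  set φ' : ℝ → ℝ := fun u => -p + p * Real.exp u / D u with hφ'def
  have hφd : ∀ v : ℝ, HasDerivAt φ (φ' v) v := by
    intro v
    have h1 : HasDerivAt (fun u => Real.log (D u)) (p * Real.exp v / D v) v :=
      (hDd v).log (hD v).ne'
    exact (((hasDerivAt_id v).const_mul (-p)).add h1).congr_deriv (by simp only [hφ'def]; ring)
  set φ'' : ℝ → ℝ := fun u => p * (1-p) * Real.exp u / (D u)^2 with hφ''def
  have hφ'd : ∀ v : ℝ, HasDerivAt φ' (φ'' v) v := by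
    intro v
    have h1 : HasDerivAt (fun u => p * Real.exp u / D u)
        ((p * Real.exp v * D v - p * Real.exp v * (p * Real.exp v)) / (D v)^2) v :=
      ((Real.hasDerivAt_exp v).const_mul p).div (hDd v) (hD v).ne'
    have h2 : (p * Real.exp v * D v - p * Real.exp v * (p * Real.exp v)) / (D v)^2
        = φ'' v := by
      simp only [hφ''def, hDdef]
      ring
    rw [h2] at h1
    simpa [hφ'def] using (h1.const_add (-p))
  have hφ''le : ∀ v : ℝ, φ'' v ≤ 1/4 := by
    intro v
    have h1 := hD v
    have h2 := Real.exp_pos v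
    rw [hφ''def, div_le_iff₀ (by positivity)]
    have : 0 ≤ ((1-p) - p * Real.exp v)^2 := sq_nonneg _
    simp only [hDdef] at h1 ⊢
    nlinarith
  -- h := u/4 - φ' u  is monotone
  set h : ℝ → ℝ := fun u => u/4 - φ' u with hhdef
  have hhd : ∀ v : ℝ, HasDerivAt h (1/4 - φ'' v) v := by
    intro v
    exact (((hasDerivAt_id v).div_const 4).sub (hφ'd v)).congr_deriv (by ring)
  have hhmono : Monotone h := by
    apply monotone_of_deriv_nonneg
    · intro v; exact (hhd v).differentiableAt
    · intro v; rw [(hhd v).deriv]; linarith [hφ''le v]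
  have hh0 : h 0 = 0 := by
    simp [hhdef, hφ'def, hDdef, Real.exp_zero]
  -- g := u^2/8 - φ u
  set g : ℝ → ℝ := fun u => u^2/8 - φ u with hgdef
  have hgd : ∀ v : ℝ, HasDerivAt g (h v) v := by
    intro v
    have : HasDerivAt (fun u : ℝ => u^2/8) (2 * v / 8) v := by
      simpa using ((hasDerivAt_pow 2 v).div_const 8)
    have := this.sub (hφd v)
    exact this.congr_deriv (by simp only [hhdef]; ring)
  have hg0 : g 0 = 0 := by simp [hgdef, hφdef, hDdef, Real.exp_zero]
  have key : ∀ v : ℝ, 0 ≤ g v := by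
    intro v
    rcases le_or_gt 0 v with hv | hv
    · have : MonotoneOn g (Set.Ici 0) := by
        apply monotoneOn_of_deriv_nonneg (convex_Ici 0)
        · exact (Differentiable.continuous (fun w => (hgd w).differentiableAt)).continuousOn
        · intro w _; exact (hgd w).differentiableAt.differentiableWithinAt
        · intro w hw
          rw [interior_Ici] at hw
          rw [(hgd w).deriv]
          calc (0:ℝ) = h 0 := hh0.symm
          _ ≤ h w := hhmono hw.le
      have := this (Set.self_mem_Ici) (Set.mem_Ici.mpr hv) hv
      linarith [hg0]
    · have : AntitoneOn g (Set.Iic 0) := by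
        apply antitoneOn_of_deriv_nonpos (convex_Iic 0)
        · exact (Differentiable.continuous (fun w => (hgd w).differentiableAt)).continuousOn
        · intro w _; exact (hgd w).differentiableAt.differentiableWithinAt
        · intro w hw
          rw [interior_Iic] at hw
          rw [(hgd w).deriv]
          calc h w ≤ h 0 := hhmono hw.le
          _ = 0 := hh0
      have := this (Set.mem_Iic.mpr hv.le) (Set.self_mem_Iic) hv.le
      linarith [hg0]
  have := key u
  simp only [hgdef, hφdef] at this
  linarith

lemma integrable_of_bdd {Ω : Type*} [MeasurableSpace Ω] {μ : Measure Ω} [IsFiniteMeasure μ]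
    {X : Ω → ℝ} (hX : Measurable X) {C : ℝ} (hC : ∀ ω, |X ω| ≤ C) : Integrable X μ :=
  ⟨hX.aestronglyMeasurable, HasFiniteIntegral.of_bounded (C := C) (ae_of_all _ hC)⟩

lemma hoeffding_mgf {Ω : Type*} [MeasurableSpace Ω] (μ : Measure Ω) [IsProbabilityMeasure μ]
    (X : Ω → ℝ) (hX : Measurable X) (c : ℝ) (hosc : ∀ ω ω', X ω - X ω' ≤ c)
    (hmean : ∫ ω, X ω ∂μ = 0) (s : ℝ) :
    ∫ ω, Real.exp (s * X ω) ∂μ ≤ Real.exp (s^2 * c^2 / 8) := by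
  have hne : Nonempty Ω := by
    by_contra h
    rw [not_nonempty_iff] at h
    have h2 : (Set.univ : Set Ω) = ∅ := Set.univ_eq_empty_iff.mpr h
    have := measure_univ (μ := μ)
    rw [h2] at this
    simp at this
  obtain ⟨ω₀⟩ := hne
  have hc0 : 0 ≤ c := by have := hosc ω₀ ω₀; linarith
  -- bounds
  set a : ℝ := sInf (Set.range X) with hadef
  have hbdd : BddBelow (Set.range X) := ⟨X ω₀ - c, by rintro - ⟨ω, rfl⟩; linarith [hosc ω₀ ω]⟩
  have hrange : (Set.range X).Nonempty := ⟨X ω₀, Set.mem_range_self ω₀⟩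
  have ha : ∀ ω, a ≤ X ω := fun ω => csInf_le hbdd (Set.mem_range_self ω)
  have hb : ∀ ω, X ω ≤ a + c := by
    intro ω
    have : X ω - c ≤ a := le_csInf hrange (by rintro - ⟨ω', rfl⟩; linarith [hosc ω ω'])
    linarith
  set b : ℝ := a + c with hbdef
  have hXb : ∀ ω, |X ω| ≤ |a| + c := by
    intro ω; rw [abs_le]
    constructor
    · linarith [ha ω, neg_abs_le a]
    · linarith [hb ω, le_abs_self a]
  have hXint : Integrable X μ := integrable_of_bdd hX hXb
  have ha0 : a ≤ 0 := by
    have : ∫ ω, (a : ℝ) ∂μ ≤ ∫ ω, X ω ∂μ :=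
      integral_mono (integrable_const a) hXint ha
    simpa [hmean] using this
  have hb0 : 0 ≤ b := by
    have : ∫ ω, X ω ∂μ ≤ ∫ ω, (b : ℝ) ∂μ :=
      integral_mono hXint (integrable_const b) hb
    simpa [hmean] using this
  rcases eq_or_lt_of_le hc0 with hc | hc
  · -- c = 0 : X is constant 0
    have hX0 : ∀ ω, X ω = 0 := by
      intro ω
      have h1 := ha ω
      have h2 := hb ω
      rw [hbdef, ← hc] at h2
      have : a = 0 := le_antisymm ha0 (by rw [hbdef, ← hc] at hb0; simpa using hb0)
      linarith [this ▸ h1, this ▸ h2]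
    simp only [hX0, mul_zero, Real.exp_zero, integral_const, measure_univ,
      ENNReal.toReal_one, probReal_univ, smul_eq_mul, one_mul, mul_one]
    exact Real.one_le_exp (by positivity)
  -- main case c > 0
  have hab : a < b := by rw [hbdef]; linarith
  -- convexity bound
  have hconv : ∀ ω, Real.exp (s * X ω) ≤
      (b - X ω)/(b-a) * Real.exp (s*a) + (X ω - a)/(b-a) * Real.exp (s*b) := by
    intro ω
    have hba : (0:ℝ) < b - a := by linarith
    have hl : 0 ≤ (b - X ω)/(b-a) := div_nonneg (by linarith [hb ω]) hba.le
    have hr : 0 ≤ (X ω - a)/(b-a) := div_nonneg (by linarith [ha ω]) hba.le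
    have hsum : (b - X ω)/(b-a) + (X ω - a)/(b-a) = 1 := by field_simp; ring
    have := convexOn_exp.2 (Set.mem_univ (s*a)) (Set.mem_univ (s*b)) hl hr hsum
    simp only [smul_eq_mul] at this
    calc Real.exp (s * X ω) = Real.exp ((b - X ω)/(b-a) * (s*a) + (X ω - a)/(b-a) * (s*b)) := by
          rw [show (b - X ω)/(b-a) * (s*a) + (X ω - a)/(b-a) * (s*b) = s * X ω from by
            field_simp; ring]
    _ ≤ _ := this
  have hexpint : Integrable (fun ω => Real.exp (s * X ω)) μ := by
    apply integrable_of_bdd (by fun_prop)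
    intro ω
    rw [abs_of_nonneg (Real.exp_nonneg _)]
    apply Real.exp_le_exp.mpr
    calc s * X ω ≤ |s * X ω| := le_abs_self _
    _ = |s| * |X ω| := abs_mul _ _
    _ ≤ |s| * (|a| + c) := by
        apply mul_le_mul_of_nonneg_left (hXb ω) (abs_nonneg s)
  set k0 : ℝ := b/(b-a) * Real.exp (s*a) + (-a)/(b-a) * Real.exp (s*b) with hk0def
  set k1 : ℝ := (Real.exp (s*b) - Real.exp (s*a))/(b-a) with hk1def
  have hba' : b - a ≠ 0 := by linarith
  have hfun : (fun ω => (b - X ω)/(b-a) * Real.exp (s*a) + (X ω - a)/(b-a) * Real.exp (s*b))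
      = fun ω => k0 + X ω * k1 := by
    funext ω
    rw [hk0def, hk1def]
    field_simp
    ring
  have hint : ∫ ω, Real.exp (s * X ω) ∂μ ≤ k0 := by
    calc ∫ ω, Real.exp (s * X ω) ∂μ
        ≤ ∫ ω, ((b - X ω)/(b-a) * Real.exp (s*a) + (X ω - a)/(b-a) * Real.exp (s*b)) ∂μ := by
          apply integral_mono hexpint _ hconv
          rw [hfun]
          exact (integrable_const k0).add (hXint.mul_const k1)
    _ = k0 := by
        rw [hfun, integral_add (integrable_const k0) (hXint.mul_const k1),
          integral_mul_const, hmean, integral_const]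
        simp
  -- rewrite RHS via p, u
  set p : ℝ := -a / c with hpdef
  set u : ℝ := s * c with hudef
  have hp0 : 0 ≤ p := div_nonneg (by linarith) hc0
  have hp1 : p ≤ 1 := by
    rw [hpdef, div_le_one hc]
    linarith [hb0]
  have hba : b - a = c := by rw [hbdef]; ring
  have hkey : k0 = Real.exp (-p*u) * (1 - p + p * Real.exp u) := by
    rw [hk0def]
    rw [hba]
    have h1 : s * b = s * a + u := by rw [hbdef, hudef]; ring
    have h2 : -p * u = s * a := by rw [hpdef, hudef]; field_simp
    rw [h1, Real.exp_add, h2]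
    have h3 : b / c = 1 - p := by rw [hpdef, hbdef]; field_simp; ring
    have h4 : -a / c = p := rfl
    rw [h3, h4]; ring
  have hpos : 0 < 1 - p + p * Real.exp u := by
    rcases eq_or_lt_of_le hp1 with h | h
    · rw [h]; simpa using Real.exp_pos u
    · nlinarith [Real.exp_pos u, mul_nonneg hp0 (Real.exp_pos u).le]
  calc ∫ ω, Real.exp (s * X ω) ∂μ
      ≤ Real.exp (-p*u) * (1 - p + p * Real.exp u) := by rw [← hkey]; exact hint
  _ = Real.exp (-p*u + Real.log (1 - p + p * Real.exp u)) := by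
      rw [Real.exp_add, Real.exp_log hpos]
  _ ≤ Real.exp (u^2/8) := Real.exp_le_exp.mpr (hoeffding_core p hp0 hp1 u)
  _ = Real.exp (s^2 * c^2/8) := by rw [hudef]; ring_nf

lemma mcdiarmid_mgf {Z : Type*} [MeasurableSpace Z] (μ : Measure Z) [IsProbabilityMeasure μ]
    (c B s : ℝ) :
    ∀ (n : ℕ) (Φ : (Fin n → Z) → ℝ), Measurable Φ → (∀ z, |Φ z| ≤ B) →
    (∀ (i : Fin n) (z z' : Fin n → Z), (∀ j, j ≠ i → z j = z' j) → Φ z - Φ z' ≤ c) →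
    ∫ z, Real.exp (s * (Φ z - ∫ w, Φ w ∂(Measure.pi fun _ : Fin n => μ)))
        ∂(Measure.pi fun _ : Fin n => μ)
      ≤ Real.exp (s^2 * n * c^2 / 8) := by
  intro n
  induction n with
  | zero =>
    intro Φ hΦm hΦb hdiff
    have hconst : Φ = fun _ => Φ default := funext fun z => congrArg Φ (Subsingleton.elim _ _)
    rw [hconst]
    simp [integral_const, measure_univ]
  | succ n IH =>
    intro Φ hΦm hΦb hdiff
    set Pn : Measure (Fin n → Z) := Measure.pi fun _ => μ with hPn
    set Pn1 : Measure (Fin (n+1) → Z) := Measure.pi fun _ => μ with hPn1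
    set P : Measure (Z × (Fin n → Z)) := μ.prod Pn with hP
    set e := MeasurableEquiv.piFinSuccAbove (fun _ : Fin (n+1) => Z) 0 with he
    have hMP : MeasurePreserving e Pn1 P :=
      measurePreserving_piFinSuccAbove (fun _ : Fin (n+1) => μ) 0
    have hMPs : MeasurePreserving e.symm P Pn1 := hMP.symm
    have hcomp : ∀ (g : (Fin (n+1) → Z) → ℝ),
        ∫ p, g (e.symm p) ∂P = ∫ z, g z ∂Pn1 := fun g =>
      hMPs.integral_comp e.symm.measurableEmbedding g
    set A : ℝ := ∫ z, Φ z ∂Pn1 with hA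
    set Ψ : Z × (Fin n → Z) → ℝ := fun p => Φ (e.symm p) with hΨ
    have hΨm : Measurable Ψ := hΦm.comp e.symm.measurable
    have hΨb : ∀ p, |Ψ p| ≤ B := fun p => hΦb _
    have hs1 : ∀ (x : Z) (y : Fin n → Z), e.symm (x, y) 0 = x := by
      intro x y
      simp [he, MeasurableEquiv.piFinSuccAbove_symm_apply]
    have hs2 : ∀ (x : Z) (y : Fin n → Z) (k : Fin n),
        e.symm (x, y) ((0 : Fin (n+1)).succAbove k) = y k := by
      intro x y k
      simp [he, MeasurableEquiv.piFinSuccAbove_symm_apply]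
    have hd0 : ∀ (x x' : Z) (y : Fin n → Z), Ψ (x, y) - Ψ (x', y) ≤ c := by
      intro x x' y
      apply hdiff 0
      intro j hj
      obtain ⟨k, rfl⟩ := Fin.exists_succAbove_eq hj
      rw [hs2, hs2]
    have hdk : ∀ (x : Z) (y y' : Fin n → Z) (k : Fin n), (∀ j, j ≠ k → y j = y' j) →
        Ψ (x, y) - Ψ (x, y') ≤ c := by
      intro x y y' k hyy
      apply hdiff ((0 : Fin (n+1)).succAbove k)
      intro j hj
      rcases eq_or_ne j 0 with rfl | hj0
      · rw [hs1, hs1]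
      · obtain ⟨m, rfl⟩ := Fin.exists_succAbove_eq hj0
        rw [hs2, hs2]
        apply hyy
        intro hmk
        exact hj (by rw [hmk])
    set F : (Fin n → Z) → ℝ := fun y => ∫ x, Ψ (x, y) ∂μ with hF
    have hFm : Measurable F := hΨm.stronglyMeasurable.integral_prod_left'.measurable
    have hΨyint : ∀ y, Integrable (fun x => Ψ (x, y)) μ := fun y =>
      integrable_of_bdd (hΨm.comp (measurable_id.prodMk measurable_const)) (fun x => hΨb _)
    have hFb : ∀ y, |F y| ≤ B := by
      intro y
      have := norm_integral_le_of_norm_le_const (μ := μ) (f := fun x => Ψ (x, y)) (C := B)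
        (ae_of_all _ fun x => by simpa [Real.norm_eq_abs] using hΨb (x, y))
      simpa [Real.norm_eq_abs, measure_univ] using this
    have hFd : ∀ (k : Fin n) (y y' : Fin n → Z), (∀ j, j ≠ k → y j = y' j) →
        F y - F y' ≤ c := by
      intro k y y' hyy
      rw [hF]
      simp only
      rw [← integral_sub (hΨyint y) (hΨyint y')]
      calc ∫ x, (Ψ (x, y) - Ψ (x, y')) ∂μ ≤ ∫ _, c ∂μ :=
            integral_mono ((hΨyint y).sub (hΨyint y')) (integrable_const c)
              (fun x => hdk x y y' k hyy)
      _ = c := by simp [measure_univ]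
    have hΨint : Integrable Ψ P := integrable_of_bdd hΨm hΨb
    have hFA : ∫ y, F y ∂Pn = A := by
      rw [hA, ← hcomp Φ]
      exact (integral_prod_symm Ψ hΨint).symm
    -- the exp integrand
    set G : Z × (Fin n → Z) → ℝ := fun p => Real.exp (s * (Ψ p - A)) with hG
    have hGm : Measurable G := by
      apply Measurable.exp
      exact (measurable_const.mul (hΨm.sub measurable_const))
    have hAb : |A| ≤ B := by
      have := norm_integral_le_of_norm_le_const (μ := Pn1) (f := Φ) (C := B)
        (ae_of_all _ fun z => by simpa [Real.norm_eq_abs] using hΦb z)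
      simpa [Real.norm_eq_abs, measure_univ] using this
    have hGb : ∀ p, |G p| ≤ Real.exp (|s| * (2*B)) := by
      intro p
      rw [hG]
      simp only
      rw [abs_of_nonneg (Real.exp_nonneg _)]
      apply Real.exp_le_exp.mpr
      calc s * (Ψ p - A) ≤ |s * (Ψ p - A)| := le_abs_self _
      _ = |s| * |Ψ p - A| := abs_mul _ _
      _ ≤ |s| * (2*B) := by
          apply mul_le_mul_of_nonneg_left _ (abs_nonneg s)
          calc |Ψ p - A| ≤ |Ψ p| + |A| := abs_sub _ _
          _ ≤ B + B := add_le_add (hΨb p) hAb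
          _ = 2*B := by ring
    have hGint : Integrable G P := integrable_of_bdd hGm hGb
    -- inner bound
    have hinner : ∀ y, ∫ x, G (x, y) ∂μ ≤ Real.exp (s^2*c^2/8) * Real.exp (s * (F y - A)) := by
      intro y
      have hsplit : ∀ x, G (x, y) = Real.exp (s * (F y - A)) * Real.exp (s * (Ψ (x,y) - F y)) := by
        intro x
        rw [hG]
        simp only
        rw [← Real.exp_add]
        congr 1
        ring
      have : ∫ x, G (x, y) ∂μ
          = Real.exp (s * (F y - A)) * ∫ x, Real.exp (s * (Ψ (x,y) - F y)) ∂μ := by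
        simp_rw [hsplit]
        rw [integral_const_mul]
      rw [this, mul_comm (Real.exp (s^2*c^2/8)) _]
      apply mul_le_mul_of_nonneg_left _ (Real.exp_nonneg _)
      apply hoeffding_mgf μ _ _ c _ _ s
      · exact ((hΨm.comp (measurable_id.prodMk measurable_const)).sub measurable_const)
      · intro x x'; simpa using hd0 x x' y
      · rw [integral_sub (hΨyint y) (integrable_const _)]
        simp [measure_univ, hF]
    -- outer chain
    have hIHF : ∫ y, Real.exp (s * (F y - A)) ∂Pn ≤ Real.exp (s^2*n*c^2/8) := by
      have := IH F hFm hFb hFd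
      rwa [hFA] at this
    have hinm : Measurable (fun y => ∫ x, G (x, y) ∂μ) :=
      hGm.stronglyMeasurable.integral_prod_left'.measurable
    have hinb : ∀ y, |∫ x, G (x, y) ∂μ| ≤ Real.exp (|s| * (2*B)) := by
      intro y
      have := norm_integral_le_of_norm_le_const (μ := μ) (f := fun x => G (x, y))
        (C := Real.exp (|s| * (2*B)))
        (ae_of_all _ fun x => by simpa [Real.norm_eq_abs] using hGb (x, y))
      simpa [Real.norm_eq_abs, measure_univ] using this
    have hexpFm : Measurable (fun y => Real.exp (s^2*c^2/8) * Real.exp (s * (F y - A))) := by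
      apply Measurable.const_mul
      exact (measurable_const.mul (hFm.sub measurable_const)).exp
    have hexpFb : ∀ y, |Real.exp (s^2*c^2/8) * Real.exp (s * (F y - A))| ≤
        Real.exp (s^2*c^2/8) * Real.exp (|s| * (2*B)) := by
      intro y
      rw [abs_of_nonneg (by positivity)]
      apply mul_le_mul_of_nonneg_left _ (Real.exp_nonneg _)
      apply Real.exp_le_exp.mpr
      calc s * (F y - A) ≤ |s * (F y - A)| := le_abs_self _
      _ = |s| * |F y - A| := abs_mul _ _
      _ ≤ |s| * (2*B) := by
          apply mul_le_mul_of_nonneg_left _ (abs_nonneg s)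
          calc |F y - A| ≤ |F y| + |A| := abs_sub _ _
          _ ≤ B + B := add_le_add (hFb y) hAb
          _ = 2*B := by ring
    calc ∫ z, Real.exp (s * (Φ z - A)) ∂Pn1
        = ∫ p, G p ∂P := (hcomp (fun z => Real.exp (s * (Φ z - A)))).symm
    _ = ∫ y, ∫ x, G (x, y) ∂μ ∂Pn := integral_prod_symm G hGint
    _ ≤ ∫ y, Real.exp (s^2*c^2/8) * Real.exp (s * (F y - A)) ∂Pn := by
        apply integral_mono (integrable_of_bdd hinm hinb) (integrable_of_bdd hexpFm hexpFb)
        exact hinner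
    _ = Real.exp (s^2*c^2/8) * ∫ y, Real.exp (s * (F y - A)) ∂Pn := integral_const_mul _ _
    _ ≤ Real.exp (s^2*c^2/8) * Real.exp (s^2*n*c^2/8) :=
        mul_le_mul_of_nonneg_left hIHF (Real.exp_nonneg _)
    _ = Real.exp (s^2 * ((n+1 : ℕ) : ℝ) * c^2 / 8) := by
        rw [← Real.exp_add]
        congr 1
        push_cast
        ring

lemma mcdiarmid_tail {Z : Type*} [MeasurableSpace Z] (μ : Measure Z) [IsProbabilityMeasure μ]
    (c B s t : ℝ) (hs : 0 ≤ s) (n : ℕ) (Φ : (Fin n → Z) → ℝ)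
    (hΦm : Measurable Φ) (hΦb : ∀ z, |Φ z| ≤ B)
    (hdiff : ∀ (i : Fin n) (z z' : Fin n → Z), (∀ j, j ≠ i → z j = z' j) → Φ z - Φ z' ≤ c) :
    (Measure.pi fun _ : Fin n => μ)
        {z | t ≤ Φ z - ∫ w, Φ w ∂(Measure.pi fun _ : Fin n => μ)}
      ≤ ENNReal.ofReal (Real.exp (s^2 * n * c^2 / 8 - s * t)) := by
  set Pn : Measure (Fin n → Z) := Measure.pi fun _ => μ with hPn
  set A : ℝ := ∫ w, Φ w ∂Pn with hA
  set f : (Fin n → Z) → ℝ := fun z => Real.exp (s * (Φ z - A)) with hf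
  have hAb : |A| ≤ B := by
    have := norm_integral_le_of_norm_le_const (μ := Pn) (f := Φ) (C := B)
      (ae_of_all _ fun z => by simpa [Real.norm_eq_abs] using hΦb z)
    simpa [Real.norm_eq_abs, measure_univ] using this
  have hfm : Measurable f := (measurable_const.mul (hΦm.sub measurable_const)).exp
  have hfb : ∀ z, |f z| ≤ Real.exp (|s| * (2*B)) := by
    intro z
    rw [hf]
    simp only
    rw [abs_of_nonneg (Real.exp_nonneg _)]
    apply Real.exp_le_exp.mpr
    calc s * (Φ z - A) ≤ |s * (Φ z - A)| := le_abs_self _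
    _ = |s| * |Φ z - A| := abs_mul _ _
    _ ≤ |s| * (2*B) := by
        apply mul_le_mul_of_nonneg_left _ (abs_nonneg s)
        calc |Φ z - A| ≤ |Φ z| + |A| := abs_sub _ _
        _ ≤ B + B := add_le_add (hΦb z) hAb
        _ = 2*B := by ring
  have hfint : Integrable f Pn := integrable_of_bdd hfm hfb
  have hsub : {z | t ≤ Φ z - A} ⊆ {z | Real.exp (s*t) ≤ f z} := by
    intro z hz
    simp only [Set.mem_setOf_eq] at hz ⊢
    rw [hf]
    apply Real.exp_le_exp.mpr
    exact mul_le_mul_of_nonneg_left hz hs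
  have hmarkov := mul_meas_ge_le_integral_of_nonneg
    (μ := Pn) (f := f) (ae_of_all _ fun z => Real.exp_nonneg _) hfint (Real.exp (s*t))
  have hmgf : ∫ z, f z ∂Pn ≤ Real.exp (s^2 * n * c^2 / 8) :=
    mcdiarmid_mgf μ c B s n Φ hΦm hΦb hdiff
  have hfin : Pn {z | t ≤ Φ z - A} ≠ ⊤ := (measure_lt_top _ _).ne
  have h1 : (Pn {z | t ≤ Φ z - A}).toReal ≤ Real.exp (s^2 * n * c^2 / 8 - s * t) := by
    have hle : (Pn {z | t ≤ Φ z - A}).toReal ≤ (Pn {z | Real.exp (s*t) ≤ f z}).toReal :=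
      ENNReal.toReal_mono (measure_lt_top _ _).ne (measure_mono hsub)
    have h2 : Real.exp (s*t) * (Pn {z | Real.exp (s*t) ≤ f z}).toReal
        ≤ Real.exp (s^2 * n * c^2 / 8) := le_trans hmarkov hmgf
    have h3 : (Pn {z | Real.exp (s*t) ≤ f z}).toReal
        ≤ Real.exp (s^2 * n * c^2 / 8) / Real.exp (s*t) := by
      rw [le_div_iff₀ (Real.exp_pos _)]
      linarith [h2]
    rw [Real.exp_sub] at *
    linarith [hle, h3]
  calc Pn {z | t ≤ Φ z - A} = ENNReal.ofReal (Pn {z | t ≤ Φ z - A}).toReal :=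
        (ENNReal.ofReal_toReal hfin).symm
  _ ≤ ENNReal.ofReal (Real.exp (s^2 * n * c^2 / 8 - s * t)) := ENNReal.ofReal_le_ofReal h1

lemma bddA {ι : Type*} {u : ι → ℝ} {M : ℝ} (h : ∀ g, u g ≤ M) : BddAbove (Set.range u) :=
  ⟨M, by rintro - ⟨g, rfl⟩; exact h g⟩

lemma abs_avg_le {N : ℕ} (hN : 0 < N) (u : Fin N → ℝ) (hu : ∀ i, |u i| ≤ 1) :
    |(1/(N:ℝ)) * ∑ i, u i| ≤ 1 := by
  have hNR : (0:ℝ) < N := by exact_mod_cast hN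
  rw [abs_mul, abs_of_nonneg (by positivity : (0:ℝ) ≤ 1/(N:ℝ))]
  have h1 : |∑ i, u i| ≤ (N:ℝ) := by
    calc |∑ i, u i| ≤ ∑ i, |u i| := Finset.abs_sum_le_sum_abs _ _
    _ ≤ ∑ _i : Fin N, (1:ℝ) := Finset.sum_le_sum (fun i _ => hu i)
    _ = (N:ℝ) := by simp
  calc (1/(N:ℝ)) * |∑ i, u i| ≤ (1/(N:ℝ)) * N := by
        apply mul_le_mul_of_nonneg_left h1 (by positivity)
  _ = 1 := by field_simp

lemma sup_abs_le' {ι : Type*} [Nonempty ι] (u : ι → ℝ) (hu : ∀ g, |u g| ≤ 1) :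
    |⨆ g, u g| ≤ 1 := by
  rw [abs_le]
  constructor
  · obtain ⟨g₀⟩ := ‹Nonempty ι›
    calc (-1:ℝ) ≤ u g₀ := by linarith [(abs_le.mp (hu g₀)).1]
    _ ≤ ⨆ g, u g := le_ciSup (bddA (fun g => (abs_le.mp (hu g)).2)) g₀
  · exact ciSup_le fun g => (abs_le.mp (hu g)).2

instance : IsProbabilityMeasure (coinFlip) := PMF.toMeasure.isProbabilityMeasure _

set_option maxHeartbeats 1000000 in
lemma symmetrization (μ : Measure Z) [IsProbabilityMeasure μ] [Countable ι] [Nonempty ι]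
    (f : ι → Z → ℝ) (hmeas : ∀ g, Measurable (f g))
    (hbound : ∀ g x, f g x ∈ Set.Icc (0 : ℝ) 1) (N : ℕ) (hN : 0 < N) :
    ∫ z, (⨆ g, (expLoss μ f g - empLoss f N g z)) ∂(Measure.pi fun _ : Fin N => μ)
      ≤ 2 * radComplexity μ f N := by
  classical
  have hNR : (0:ℝ) < N := by exact_mod_cast hN
  set Pn : Measure (Fin N → Z) := Measure.pi fun _ => μ with hPn
  set ν : Measure (Z × Z) := μ.prod μ with hν
  set P2 : Measure (Fin N → Z × Z) := Measure.pi fun _ => ν with hP2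
  set PB : Measure (Fin N → Bool) := Measure.pi fun _ => coinFlip with hPB
  have hrsm : Measurable rsign := fun _ _ => trivial
  have hnotm : Measurable (fun b : Bool => !b) := fun _ _ => trivial
  -- basic bounds
  have hempm : ∀ g, Measurable (fun z : Fin N → Z => empLoss f N g z) := by
    intro g
    unfold empLoss
    exact measurable_const.mul
      (Finset.measurable_sum Finset.univ (fun i _ => (hmeas g).comp (measurable_pi_apply i)))
  have hempIcc : ∀ g z, empLoss f N g z ∈ Set.Icc (0:ℝ) 1 := by
    intro g z
    constructor
    · apply mul_nonneg (by positivity)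
      exact Finset.sum_nonneg fun i _ => (hbound g (z i)).1
    · unfold empLoss
      have h1 : ∑ i, f g (z i) ≤ (N:ℝ) := by
        calc ∑ i, f g (z i) ≤ ∑ _i : Fin N, (1:ℝ) :=
              Finset.sum_le_sum (fun i _ => (hbound g (z i)).2)
        _ = (N:ℝ) := by simp
      calc (1/(N:ℝ)) * ∑ i, f g (z i) ≤ (1/(N:ℝ)) * N := by
            apply mul_le_mul_of_nonneg_left h1 (by positivity)
      _ = 1 := by field_simp
  have hfint : ∀ g, Integrable (f g) μ :=
    fun g => integrable_of_bdd (hmeas g) (C := 1)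
      (fun x => abs_le.mpr ⟨by linarith [(hbound g x).1], (hbound g x).2⟩)
  have hexpIcc : ∀ g, expLoss μ f g ∈ Set.Icc (0:ℝ) 1 := by
    intro g
    constructor
    · exact integral_nonneg fun x => (hbound g x).1
    · calc ∫ x, f g x ∂μ ≤ ∫ _x, (1:ℝ) ∂μ :=
          integral_mono (hfint g) (integrable_const 1) (fun x => (hbound g x).2)
      _ = 1 := by simp
  -- eval marginals
  have heval : ∀ i : Fin N, MeasurePreserving (fun z : Fin N → Z => z i) Pn μ := by
    intro i
    refine ⟨measurable_pi_apply i, ?_⟩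
    ext s hs
    rw [Measure.map_apply (measurable_pi_apply i) hs]
    have h0 : (fun z : Fin N → Z => z i) ⁻¹' s
        = Set.univ.pi (Function.update (fun _ => Set.univ) i s) := Set.eval_preimage
    rw [h0, hPn, Measure.pi_pi]
    have h1 : ∀ j, μ (Function.update (fun _ => Set.univ) i s j)
        = Function.update (fun _ => μ Set.univ) i (μ s) j := by
      intro j
      exact Function.apply_update (fun _ t => μ t) (fun _ => Set.univ) i s j
    simp_rw [h1]
    rw [Finset.prod_update_of_mem (Finset.mem_univ i)]
    simp [measure_univ]
  -- expLoss as expectation of empLoss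
  have hLg : ∀ g, expLoss μ f g = ∫ y, empLoss f N g y ∂Pn := by
    intro g
    have h1 : ∀ i : Fin N, ∫ y, f g (y i) ∂Pn = expLoss μ f g := by
      intro i
      rw [expLoss, ← (heval i).map_eq]
      exact (integral_map (measurable_pi_apply i).aemeasurable
        (by rw [(heval i).map_eq]; exact (hmeas g).aestronglyMeasurable)).symm
    have h2 : ∫ y, empLoss f N g y ∂Pn = (1/(N:ℝ)) * ∑ i, ∫ y, f g (y i) ∂Pn := by
      unfold empLoss
      push_cast
      rw [integral_const_mul, integral_finset_sum]
      intro i _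
      exact integrable_of_bdd ((hmeas g).comp (measurable_pi_apply i)) (C := 1)
        (fun y => abs_le.mpr ⟨by linarith [(hbound g (y i)).1], (hbound g (y i)).2⟩)
    rw [h2]
    simp_rw [h1]
    rw [Finset.sum_const]
    simp only [Finset.card_univ, Fintype.card_fin, nsmul_eq_mul]
    field_simp
  -- measure preserving maps
  have hmpfst : MeasurePreserving (Prod.fst : Z × Z → Z) ν μ :=
    ⟨measurable_fst, by rw [hν, Measure.map_fst_prod]; simp⟩
  have hmpsnd : MeasurePreserving (Prod.snd : Z × Z → Z) ν μ :=
    ⟨measurable_snd, by rw [hν, Measure.map_snd_prod]; simp⟩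
  have hfsts : MeasurePreserving (fun v : Fin N → Z × Z => fun i => (v i).1) P2 Pn :=
    measurePreserving_pi _ _ (fun _ => hmpfst)
  have hsnds : MeasurePreserving (fun v : Fin N → Z × Z => fun i => (v i).2) P2 Pn :=
    measurePreserving_pi _ _ (fun _ => hmpsnd)
  have hbridge : MeasurePreserving
      (⇑(MeasurableEquiv.arrowProdEquivProdArrow Z Z (Fin N))) P2 (Pn.prod Pn) :=
    measurePreserving_arrowProdEquivProdArrow Z Z (Fin N) (fun _ => μ) (fun _ => μ)
  have hnot1 : MeasurePreserving (fun b : Bool => !b) coinFlip coinFlip := by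
    refine ⟨hnotm, ?_⟩
    rw [coinFlip, PMF.toMeasure_map _ _ hnotm]
    congr 1
    ext b
    rw [PMF.map_apply, tsum_bool]
    cases b <;> simp [PMF.uniformOfFintype_apply]
  have hnots : MeasurePreserving (fun ξ : Fin N → Bool => fun i => !(ξ i)) PB PB :=
    measurePreserving_pi _ _ (fun _ => hnot1)
  -- swap maps
  have hswap : MeasurePreserving (Prod.swap : Z × Z → Z × Z) ν ν := by
    rw [hν]; exact Measure.measurePreserving_swap
  have hT : ∀ ξ : Fin N → Bool, MeasurePreserving
      (fun v : Fin N → Z × Z => fun i => if ξ i then v i else (v i).swap) P2 P2 := by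
    intro ξ
    have hσ : ∀ b : Bool, MeasurePreserving (fun p : Z × Z => if b then p else p.swap) ν ν := by
      intro b
      cases b
      · exact hswap
      · exact MeasurePreserving.id ν
    exact measurePreserving_pi _ _ (fun i => hσ (ξ i))
  -- integrand definitions
  set Φ : (Fin N → Z) → ℝ := fun z => ⨆ g, (expLoss μ f g - empLoss f N g z) with hΦ
  set K : (Fin N → Z) × (Fin N → Z) → ℝ :=
    fun q => ⨆ g, (empLoss f N g q.2 - empLoss f N g q.1) with hK
  set Hxi : (Fin N → Bool) → (Fin N → Z × Z) → ℝ :=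
    fun ξ v => ⨆ g, (1/(N:ℝ)) * ∑ i, rsign (ξ i) * (f g ((v i).2) - f g ((v i).1)) with hHxi
  set Rf : (Fin N → Z) × (Fin N → Bool) → ℝ :=
    fun p => ⨆ g, (1/(N:ℝ)) * ∑ i, rsign (p.2 i) * f g (p.1 i) with hRf
  set r : (Fin N → Bool) → ℝ := fun ξ => ∫ z, Rf (z, ξ) ∂Pn with hr
  -- bounds on sup families
  have habs1 : ∀ g (ξ : Fin N → Bool) (z : Fin N → Z),
      |(1/(N:ℝ)) * ∑ i, rsign (ξ i) * f g (z i)| ≤ 1 := by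
    intro g ξ z
    apply abs_avg_le hN
    intro i
    rw [abs_mul]
    have h1 : |rsign (ξ i)| = 1 := by cases ξ i <;> simp [rsign]
    rw [h1, one_mul]
    exact abs_le.mpr ⟨by linarith [(hbound g (z i)).1], (hbound g (z i)).2⟩
  have habs2 : ∀ g (ξ : Fin N → Bool) (v : Fin N → Z × Z),
      |(1/(N:ℝ)) * ∑ i, rsign (ξ i) * (f g ((v i).2) - f g ((v i).1))| ≤ 1 := by
    intro g ξ v
    apply abs_avg_le hN
    intro i
    rw [abs_mul]
    have h1 : |rsign (ξ i)| = 1 := by cases ξ i <;> simp [rsign]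
    rw [h1, one_mul, abs_le]
    constructor
    · linarith [(hbound g ((v i).2)).1, (hbound g ((v i).1)).2]
    · linarith [(hbound g ((v i).2)).2, (hbound g ((v i).1)).1]
  have habsK : ∀ g (q : (Fin N → Z) × (Fin N → Z)),
      |empLoss f N g q.2 - empLoss f N g q.1| ≤ 1 := by
    intro g q
    rw [abs_le]
    constructor
    · linarith [(hempIcc g q.2).1, (hempIcc g q.1).2]
    · linarith [(hempIcc g q.2).2, (hempIcc g q.1).1]
  -- measurability of sups
  have hΦm : Measurable Φ :=
    Measurable.iSup (fun g => measurable_const.sub (hempm g))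
  have hKm : Measurable K :=
    Measurable.iSup (fun g => ((hempm g).comp measurable_snd).sub ((hempm g).comp measurable_fst))
  have hRfm : Measurable Rf := by
    apply Measurable.iSup
    intro g
    apply Measurable.const_mul
    apply Finset.measurable_sum
    intro i _
    exact (hrsm.comp ((measurable_pi_apply i).comp measurable_snd)).mul
      ((hmeas g).comp ((measurable_pi_apply i).comp measurable_fst))
  have hHxim : ∀ ξ, Measurable (Hxi ξ) := by
    intro ξ
    apply Measurable.iSup
    intro g
    apply Measurable.const_mul
    apply Finset.measurable_sum
    intro i _
    apply Measurable.const_mul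
    exact ((hmeas g).comp (measurable_snd.comp (measurable_pi_apply i))).sub
      ((hmeas g).comp (measurable_fst.comp (measurable_pi_apply i)))
  -- bounds on sups
  have hΦb : ∀ z, |Φ z| ≤ 1 := by
    intro z
    rw [hΦ]
    exact sup_abs_le' _ (fun g =>
      abs_le.mpr ⟨by linarith [(hexpIcc g).1, (hempIcc g z).2],
        by linarith [(hexpIcc g).2, (hempIcc g z).1]⟩)
  have hKb : ∀ q, |K q| ≤ 1 := by
    intro q
    rw [hK]
    exact sup_abs_le' _ (fun g => habsK g q)
  have hRfb : ∀ p, |Rf p| ≤ 1 := by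
    intro p
    rw [hRf]
    exact sup_abs_le' _ (fun g => habs1 g p.2 p.1)
  have hHxib : ∀ ξ v, |Hxi ξ v| ≤ 1 := by
    intro ξ v
    rw [hHxi]
    exact sup_abs_le' _ (fun g => habs2 g ξ v)
  -- Step A : ghost sample
  have hKint : Integrable K (Pn.prod Pn) := integrable_of_bdd hKm hKb
  have hempint : ∀ g, Integrable (fun y => empLoss f N g y) Pn := fun g =>
    integrable_of_bdd (hempm g) (C := 1)
      (fun y => abs_le.mpr ⟨by linarith [(hempIcc g y).1], (hempIcc g y).2⟩)
  have hstepA1 : ∀ z, Φ z ≤ ∫ y, K (z, y) ∂Pn := by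
    intro z
    apply ciSup_le
    intro g
    have h1 : expLoss μ f g - empLoss f N g z
        = ∫ y, (empLoss f N g y - empLoss f N g z) ∂Pn := by
      rw [integral_sub (hempint g) (integrable_const _), integral_const]
      simp [measure_univ, hLg g]
    rw [h1]
    apply integral_mono ((hempint g).sub (integrable_const _))
      (integrable_of_bdd (hKm.comp (measurable_const.prodMk measurable_id))
        (C := 1) (fun y => hKb (z, y)))
    intro y
    exact le_ciSup (bddA (fun g' => (abs_le.mp (habsK g' (z, y))).2)) g
  have hκm : Measurable (fun z => ∫ y, K (z, y) ∂Pn) :=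
    hKm.stronglyMeasurable.integral_prod_right'.measurable
  have hκb : ∀ z, |∫ y, K (z, y) ∂Pn| ≤ 1 := by
    intro z
    have := norm_integral_le_of_norm_le_const (μ := Pn) (f := fun y => K (z, y)) (C := 1)
      (ae_of_all _ fun y => by simpa [Real.norm_eq_abs] using hKb (z, y))
    simpa [Real.norm_eq_abs, measure_univ] using this
  set S : ℝ := ∫ v, K (fun i => (v i).1, fun i => (v i).2) ∂P2 with hS
  have hKpairm : Measurable (fun v : Fin N → Z × Z => K (fun i => (v i).1, fun i => (v i).2)) :=
    hKm.comp (hfsts.measurable.prodMk hsnds.measurable)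
  have hSdef : ∫ q, K q ∂(Pn.prod Pn) = S := by
    rw [hS, ← hbridge.map_eq]
    exact integral_map hbridge.measurable.aemeasurable
      (by rw [hbridge.map_eq]; exact hKm.aestronglyMeasurable)
  have hstepA : ∫ z, Φ z ∂Pn ≤ S := by
    calc ∫ z, Φ z ∂Pn ≤ ∫ z, (∫ y, K (z, y) ∂Pn) ∂Pn :=
          integral_mono (integrable_of_bdd hΦm hΦb) (integrable_of_bdd hκm hκb) hstepA1
    _ = ∫ q, K q ∂(Pn.prod Pn) := (integral_prod K hKint).symm
    _ = S := hSdef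
  -- Step B : sign symmetry
  have hstepB : ∀ ξ : Fin N → Bool, S = ∫ v, Hxi ξ v ∂P2 := by
    intro ξ
    set T : (Fin N → Z × Z) → (Fin N → Z × Z) :=
      fun v => fun i => if ξ i then v i else (v i).swap with hTdef
    have hTmp : MeasurePreserving T P2 P2 := hT ξ
    have h1 : ∫ v, K (fun i => (v i).1, fun i => (v i).2) ∂(Measure.map T P2)
        = ∫ v, K (fun i => ((T v) i).1, fun i => ((T v) i).2) ∂P2 :=
      integral_map hTmp.measurable.aemeasurable
        (by rw [hTmp.map_eq]; exact hKpairm.aestronglyMeasurable)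
    rw [hTmp.map_eq] at h1
    rw [hS, h1]
    have h2 : ∀ v, K (fun i => ((T v) i).1, fun i => ((T v) i).2) = Hxi ξ v := by
      intro v
      rw [hK, hHxi]
      simp only
      congr 1
      funext g
      unfold empLoss
      push_cast
      rw [← mul_sub, ← Finset.sum_sub_distrib]
      congr 1
      apply Finset.sum_congr rfl
      intro i _
      cases hξi : ξ i <;> simp [hTdef, hξi, rsign] <;> ring
    exact integral_congr_ae (ae_of_all _ h2)
  -- Step C : sup subadditivity (pointwise)
  have hstepC : ∀ (ξ : Fin N → Bool) v, Hxi ξ v ≤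
      Rf ((fun i => (v i).2), ξ) + Rf ((fun i => (v i).1), fun i => !(ξ i)) := by
    intro ξ v
    apply ciSup_le
    intro g
    have hsplit : (1/(N:ℝ)) * ∑ i, rsign (ξ i) * (f g ((v i).2) - f g ((v i).1))
        = (1/(N:ℝ)) * ∑ i, rsign (ξ i) * f g ((v i).2)
          + (1/(N:ℝ)) * ∑ i, rsign (!(ξ i)) * f g ((v i).1) := by
      rw [← mul_add, ← Finset.sum_add_distrib]
      congr 1
      apply Finset.sum_congr rfl
      intro i _
      cases ξ i <;> simp [rsign] <;> ring
    rw [hsplit, hRf]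
    exact add_le_add
      (le_ciSup (bddA (fun g' => (abs_le.mp (habs1 g' ξ (fun i => (v i).2))).2)) g)
      (le_ciSup (bddA (fun g' =>
        (abs_le.mp (habs1 g' (fun i => !(ξ i)) (fun i => (v i).1))).2)) g)
  -- Step D : marginals
  have hRsndm : ∀ ξ : Fin N → Bool,
      Measurable (fun v : Fin N → Z × Z => Rf ((fun i => (v i).2), ξ)) := fun ξ =>
    hRfm.comp (hsnds.measurable.prodMk measurable_const)
  have hRfstm : ∀ ξ : Fin N → Bool,
      Measurable (fun v : Fin N → Z × Z => Rf ((fun i => (v i).1), ξ)) := fun ξ =>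
    hRfm.comp (hfsts.measurable.prodMk measurable_const)
  have hD2 : ∀ ξ : Fin N → Bool, ∫ v, Rf ((fun i => (v i).2), ξ) ∂P2 = r ξ := by
    intro ξ
    have h1 : ∫ z, Rf (z, ξ) ∂(Measure.map (fun v : Fin N → Z × Z => fun i => (v i).2) P2)
        = ∫ v, Rf ((fun i => (v i).2), ξ) ∂P2 :=
      integral_map hsnds.measurable.aemeasurable
        (by rw [hsnds.map_eq]
            exact (hRfm.comp (measurable_id.prodMk measurable_const)).aestronglyMeasurable)
    rw [hsnds.map_eq] at h1
    rw [hr, ← h1]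
  have hD1 : ∀ ξ : Fin N → Bool, ∫ v, Rf ((fun i => (v i).1), ξ) ∂P2 = r ξ := by
    intro ξ
    have h1 : ∫ z, Rf (z, ξ) ∂(Measure.map (fun v : Fin N → Z × Z => fun i => (v i).1) P2)
        = ∫ v, Rf ((fun i => (v i).1), ξ) ∂P2 :=
      integral_map hfsts.measurable.aemeasurable
        (by rw [hfsts.map_eq]
            exact (hRfm.comp (measurable_id.prodMk measurable_const)).aestronglyMeasurable)
    rw [hfsts.map_eq] at h1
    rw [hr, ← h1]
  have hSr : ∀ ξ : Fin N → Bool, S ≤ r ξ + r (fun i => !(ξ i)) := by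
    intro ξ
    rw [hstepB ξ]
    calc ∫ v, Hxi ξ v ∂P2
        ≤ ∫ v, (Rf ((fun i => (v i).2), ξ) + Rf ((fun i => (v i).1), fun i => !(ξ i))) ∂P2 :=
          integral_mono (integrable_of_bdd (hHxim ξ) (hHxib ξ))
            ((integrable_of_bdd (hRsndm ξ) (fun v => hRfb _)).add
              (integrable_of_bdd (hRfstm _) (fun v => hRfb _))) (hstepC ξ)
    _ = (∫ v, Rf ((fun i => (v i).2), ξ) ∂P2)
          + ∫ v, Rf ((fun i => (v i).1), fun i => !(ξ i)) ∂P2 :=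
          integral_add (integrable_of_bdd (hRsndm ξ) (fun v => hRfb _))
            (integrable_of_bdd (hRfstm _) (fun v => hRfb _))
    _ = r ξ + r (fun i => !(ξ i)) := by rw [hD2, hD1]
  -- Step E : average over signs
  have hRfint : Integrable Rf (Pn.prod PB) := integrable_of_bdd hRfm hRfb
  have hrad : radComplexity μ f N = ∫ ξ, r ξ ∂PB := by
    rw [radComplexity]
    exact integral_prod_symm Rf hRfint
  have hrm : Measurable r := hRfm.stronglyMeasurable.integral_prod_left'.measurable
  have hrb : ∀ ξ, |r ξ| ≤ 1 := by
    intro ξ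
    have := norm_integral_le_of_norm_le_const (μ := Pn) (f := fun z => Rf (z, ξ)) (C := 1)
      (ae_of_all _ fun z => by simpa [Real.norm_eq_abs] using hRfb (z, ξ))
    simpa [Real.norm_eq_abs, measure_univ] using this
  have hrint : Integrable r PB := integrable_of_bdd hrm hrb
  have hrnotint : Integrable (fun ξ => r (fun i => !(ξ i))) PB :=
    integrable_of_bdd (hrm.comp hnots.measurable) (fun ξ => hrb _)
  have hrnot : ∫ ξ, r (fun i => !(ξ i)) ∂PB = ∫ ξ, r ξ ∂PB := by
    calc ∫ ξ, r (fun i => !(ξ i)) ∂PB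
        = ∫ ξ, r ξ ∂(Measure.map (fun (ξ : Fin N → Bool) i => !(ξ i)) PB) :=
          (integral_map hnots.measurable.aemeasurable
            (by rw [hnots.map_eq]; exact hrm.aestronglyMeasurable)).symm
    _ = ∫ ξ, r ξ ∂PB := by rw [hnots.map_eq]
  calc ∫ z, Φ z ∂Pn ≤ S := hstepA
  _ = ∫ _ξ, S ∂PB := by rw [integral_const]; simp [measure_univ]
  _ ≤ ∫ ξ, (r ξ + r (fun i => !(ξ i))) ∂PB :=
      integral_mono (integrable_const S) (hrint.add hrnotint) (fun ξ => hSr ξ)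
  _ = (∫ ξ, r ξ ∂PB) + ∫ ξ, r (fun i => !(ξ i)) ∂PB := integral_add hrint hrnotint
  _ = 2 * radComplexity μ f N := by rw [hrnot, hrad]; ring


set_option maxHeartbeats 1000000 in
/-- **Uniform generalization bound**: for i.i.d. samples `z ~ μ^{⊗N}` and `δ ∈ (0,1)`, with
probability at least `1 - δ`, simultaneously for all `g ∈ ι`,
`L(g) ≤ L_N(g)(z) + 2 C(N) + √(log(1/δ)/(2N))`. -/
theorem uniform_generalization_bound
    (μ : Measure Z) [IsProbabilityMeasure μ] [Countable ι] [Nonempty ι]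
    (f : ι → Z → ℝ) (hmeas : ∀ g, Measurable (f g))
    (hbound : ∀ g x, f g x ∈ Set.Icc (0 : ℝ) 1)
    (N : ℕ) (hN : 0 < N) (δ : ℝ) (hδ : δ ∈ Set.Ioo (0 : ℝ) 1) :
    (Measure.pi fun _ : Fin N => μ)
      {z | ∀ g : ι, expLoss μ f g ≤
        empLoss f N g z + 2 * radComplexity μ f N +
          Real.sqrt (Real.log (1 / δ) / (2 * N))}
      ≥ ENNReal.ofReal (1 - δ) := by
  classical
  obtain ⟨hδ0, hδ1⟩ := hδ
  have hNR : (0:ℝ) < N := by exact_mod_cast hN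
  set Pn : Measure (Fin N → Z) := Measure.pi fun _ => μ with hPn
  set t : ℝ := Real.sqrt (Real.log (1 / δ) / (2 * N)) with ht
  set C : ℝ := radComplexity μ f N with hC
  set Φ : (Fin N → Z) → ℝ := fun z => ⨆ g, (expLoss μ f g - empLoss f N g z) with hΦ
  -- basic bounds (as in symmetrization)
  have hempm : ∀ g, Measurable (fun z : Fin N → Z => empLoss f N g z) := by
    intro g
    unfold empLoss
    exact measurable_const.mul
      (Finset.measurable_sum Finset.univ (fun i _ => (hmeas g).comp (measurable_pi_apply i)))
  have hempIcc : ∀ g z, empLoss f N g z ∈ Set.Icc (0:ℝ) 1 := by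
    intro g z
    constructor
    · apply mul_nonneg (by positivity)
      exact Finset.sum_nonneg fun i _ => (hbound g (z i)).1
    · unfold empLoss
      have h1 : ∑ i, f g (z i) ≤ (N:ℝ) := by
        calc ∑ i, f g (z i) ≤ ∑ _i : Fin N, (1:ℝ) :=
              Finset.sum_le_sum (fun i _ => (hbound g (z i)).2)
        _ = (N:ℝ) := by simp
      calc (1/(N:ℝ)) * ∑ i, f g (z i) ≤ (1/(N:ℝ)) * N := by
            apply mul_le_mul_of_nonneg_left h1 (by positivity)
      _ = 1 := by field_simp
  have hfint : ∀ g, Integrable (f g) μ :=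
    fun g => integrable_of_bdd (hmeas g) (C := 1)
      (fun x => abs_le.mpr ⟨by linarith [(hbound g x).1], (hbound g x).2⟩)
  have hexpIcc : ∀ g, expLoss μ f g ∈ Set.Icc (0:ℝ) 1 := by
    intro g
    constructor
    · exact integral_nonneg fun x => (hbound g x).1
    · calc ∫ x, f g x ∂μ ≤ ∫ _x, (1:ℝ) ∂μ :=
          integral_mono (hfint g) (integrable_const 1) (fun x => (hbound g x).2)
      _ = 1 := by simp
  have habsτ : ∀ g (z : Fin N → Z), |expLoss μ f g - empLoss f N g z| ≤ 1 := by
    intro g z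
    rw [abs_le]
    constructor
    · linarith [(hexpIcc g).1, (hempIcc g z).2]
    · linarith [(hexpIcc g).2, (hempIcc g z).1]
  have hΦm : Measurable Φ :=
    Measurable.iSup (fun g => measurable_const.sub (hempm g))
  have hΦb : ∀ z, |Φ z| ≤ 1 := by
    intro z
    rw [hΦ]
    exact sup_abs_le' _ (fun g => habsτ g z)
  -- bounded differences
  have hdiff : ∀ (i : Fin N) (z z' : Fin N → Z), (∀ j, j ≠ i → z j = z' j) →
      Φ z - Φ z' ≤ 1/(N:ℝ) := by
    intro i z z' hzz
    rw [sub_le_iff_le_add]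
    rw [hΦ]
    apply ciSup_le
    intro g
    have h1 : empLoss f N g z' - empLoss f N g z ≤ 1/(N:ℝ) := by
      unfold empLoss
      rw [← mul_sub, ← Finset.sum_sub_distrib]
      have hsum : ∑ j, (f g (z' j) - f g (z j)) = f g (z' i) - f g (z i) := by
        apply Finset.sum_eq_single i
        · intro j _ hj
          rw [hzz j hj]
          exact sub_self _
        · intro h
          exact absurd (Finset.mem_univ i) h
      rw [hsum]
      have h2 : f g (z' i) - f g (z i) ≤ 1 := by
        linarith [(hbound g (z' i)).2, (hbound g (z i)).1]
      calc (1/(N:ℝ)) * (f g (z' i) - f g (z i)) ≤ (1/(N:ℝ)) * 1 :=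
            mul_le_mul_of_nonneg_left h2 (by positivity)
      _ = 1/(N:ℝ) := mul_one _
    have h2 : expLoss μ f g - empLoss f N g z' ≤ Φ z' := by
      rw [hΦ]
      exact le_ciSup (bddA (fun g' => (abs_le.mp (habsτ g' z')).2)) g
    linarith
  -- symmetrization
  set A : ℝ := ∫ z, Φ z ∂Pn with hA
  have hA2C : A ≤ 2 * C := symmetrization μ f hmeas hbound N hN
  -- event algebra
  have hEvent : {z : Fin N → Z | ∀ g : ι, expLoss μ f g ≤
      empLoss f N g z + 2 * C + t} = {z | Φ z ≤ 2 * C + t} := by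
    ext z
    simp only [Set.mem_setOf_eq]
    constructor
    · intro h
      rw [hΦ]
      exact ciSup_le fun g => by linarith [h g]
    · intro h g
      have h2 : expLoss μ f g - empLoss f N g z ≤ Φ z := by
        rw [hΦ]
        exact le_ciSup (bddA (fun g' => (abs_le.mp (habsτ g' z)).2)) g
      linarith
  have hmE : MeasurableSet {z : Fin N → Z | Φ z ≤ 2 * C + t} :=
    measurableSet_le hΦm measurable_const
  have hcompl : {z : Fin N → Z | Φ z ≤ 2 * C + t}ᶜ ⊆ {z | t ≤ Φ z - A} := by
    intro z hz
    simp only [Set.mem_compl_iff, Set.mem_setOf_eq, not_le] at hz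
    simp only [Set.mem_setOf_eq]
    linarith
  -- the tail bound with the optimal s
  have hlog : 0 ≤ Real.log (1/δ) :=
    Real.log_nonneg (by rw [le_div_iff₀ hδ0]; linarith)
  have ht0 : 0 ≤ t := Real.sqrt_nonneg _
  have htsq : t^2 = Real.log (1/δ) / (2*N) := Real.sq_sqrt (by positivity)
  set s : ℝ := 4 * t * N with hs
  have hs0 : 0 ≤ s := by positivity
  have htail := mcdiarmid_tail μ (1/(N:ℝ)) 1 s t hs0 N Φ hΦm hΦb hdiff
  have hexp : Real.exp (s^2 * (N:ℝ) * (1/(N:ℝ))^2 / 8 - s * t) = δ := by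
    have h1 : s^2 * (N:ℝ) * (1/(N:ℝ))^2 / 8 - s * t = -(2 * (N:ℝ) * t^2) := by
      rw [hs]
      field_simp
      ring
    have h2 : 2 * (N:ℝ) * t^2 = Real.log (1/δ) := by
      rw [htsq]
      field_simp
    have h3 : -Real.log (1/δ) = Real.log δ := by
      rw [one_div, Real.log_inv, neg_neg]
    rw [h1, h2, h3, Real.exp_log hδ0]
  have htail2 : Pn {z | t ≤ Φ z - A} ≤ ENNReal.ofReal δ := by
    rw [← hexp]
    exact htail
  have hEc : Pn {z : Fin N → Z | Φ z ≤ 2 * C + t}ᶜ ≤ ENNReal.ofReal δ :=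
    le_trans (measure_mono hcompl) htail2
  have hc : Pn {z : Fin N → Z | Φ z ≤ 2 * C + t}ᶜ
      = 1 - Pn {z | Φ z ≤ 2 * C + t} := by
    rw [measure_compl hmE (measure_ne_top _ _), measure_univ]
  rw [ge_iff_le, hEvent]
  calc ENNReal.ofReal (1 - δ) = ENNReal.ofReal 1 - ENNReal.ofReal δ :=
        ENNReal.ofReal_sub 1 hδ0.le
  _ = 1 - ENNReal.ofReal δ := by rw [ENNReal.ofReal_one]
  _ ≤ 1 - Pn {z : Fin N → Z | Φ z ≤ 2 * C + t}ᶜ := tsub_le_tsub_left hEc 1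
  _ = Pn {z | Φ z ≤ 2 * C + t} := by
      rw [hc, ENNReal.sub_sub_cancel ENNReal.one_ne_top prob_le_one]
end
end

section
/- Consistency of ERM (consequence of Theorem 1 stated in the paper): suppose the Rademacher complexities satisfy C(N) → 0 as N → ∞. For each N let Ĝ_N be an ε_N-approximate empirical risk minimizer on an i.i.d. sample of size N with ε_N → 0. Then for every δ ∈ (0,1) and every ρ > 0 there exists N₀ such that for all N ≥ N₀, with probability at least 1 − δ, L(Ĝ_N) − inf_{g ∈ ι} L(g) ≤ ρ. -/
open MeasureTheory

noncomputable section

variable {Z : Type*} [MeasurableSpace Z] {ι : Type*}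

/- ### auxiliary lemmas -/

instance inst_s11 : IsProbabilityMeasure (coinFlip) := by
  unfold coinFlip; infer_instance

lemma abs_rsign (b : Bool) : |rsign b| = 1 := by cases b <;> simp [rsign]

lemma rsign_not (b : Bool) : rsign (!b) = - rsign b := by cases b <;> simp [rsign]

lemma measurable_rsign : Measurable rsign := measurable_of_finite _

lemma coinFlip_not : MeasurePreserving (fun b => !b) coinFlip coinFlip := by
  refine ⟨measurable_of_finite _, ?_⟩
  ext s hs
  rw [Measure.map_apply (measurable_of_finite _) hs]
  unfold coinFlip
  rw [PMF.toMeasure_apply _ hs, PMF.toMeasure_apply _ (hs.preimage (measurable_of_finite _))]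
  rw [tsum_fintype, tsum_fintype]
  rw [Fintype.sum_bool (f := fun x => Set.indicator ((fun b => !b) ⁻¹' s) (⇑(PMF.uniformOfFintype Bool)) x)]
  rw [Fintype.sum_bool (f := fun x => Set.indicator s (⇑(PMF.uniformOfFintype Bool)) x)]
  simp only [Set.indicator, Set.mem_preimage, Bool.not_true, Bool.not_false]
  simp [PMF.uniformOfFintype_apply]
  exact add_comm _ _

lemma avg_abs_le {N : ℕ} (a : Fin N → ℝ) {c : ℝ} (hc : 0 ≤ c) (h : ∀ i, |a i| ≤ c) :
    |(1 / (N : ℝ)) * ∑ i, a i| ≤ c := by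
  have h1 : |∑ i, a i| ≤ (N : ℝ) * c := by
    calc |∑ i, a i| ≤ ∑ i, |a i| := Finset.abs_sum_le_sum_abs _ _
      _ ≤ ∑ _i : Fin N, c := Finset.sum_le_sum (fun i _ => h i)
      _ = N * c := by simp [mul_comm]
  rcases Nat.eq_zero_or_pos N with hN | hN
  · subst hN; simpa using hc
  · have hN' : (0 : ℝ) < N := by exact_mod_cast hN
    rw [abs_mul, abs_of_nonneg (by positivity : (0:ℝ) ≤ 1 / (N:ℝ))]
    calc (1 / (N:ℝ)) * |∑ i, a i| ≤ (1 / (N:ℝ)) * ((N:ℝ) * c) := by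
          exact mul_le_mul_of_nonneg_left h1 (by positivity)
      _ = c := by field_simp

lemma bddAbove_of_le {u : ι → ℝ} {c : ℝ} (h : ∀ g, u g ≤ c) : BddAbove (Set.range u) :=
  ⟨c, by rintro x ⟨g, rfl⟩; exact h g⟩

lemma abs_ciSup_le [Nonempty ι] {u : ι → ℝ} {c : ℝ} (h : ∀ g, |u g| ≤ c) :
    |⨆ g, u g| ≤ c := by
  have hb : BddAbove (Set.range u) := bddAbove_of_le (fun g => (abs_le.1 (h g)).2)
  rw [abs_le]
  constructor
  · exact le_trans (abs_le.1 (h (Classical.arbitrary ι))).1 (le_ciSup hb _)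
  · exact ciSup_le (fun g => (abs_le.1 (h g)).2)

lemma integrable_of_bound {α : Type*} [MeasurableSpace α] (P : Measure α) [IsFiniteMeasure P]
    {h : α → ℝ} (hm : Measurable h) (c : ℝ) (hb : ∀ x, |h x| ≤ c) : Integrable h P :=
  ⟨hm.aestronglyMeasurable,
    HasFiniteIntegral.of_bounded (C := c) (ae_of_all _ (fun x => by simpa using hb x))⟩

section Aux

variable (μ : Measure Z) [IsProbabilityMeasure μ] {f : ι → Z → ℝ}

lemma integral_pi_prod {N : ℕ} (u : Fin N → Z → ℝ) :
    ∫ z : Fin N → Z, ∏ i, u i (z i) ∂(Measure.pi fun _ => μ) = ∏ i, ∫ x, u i x ∂μ := by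
  letI : MeasureSpace Z := ⟨μ⟩
  haveI : SigmaFinite (volume : Measure Z) := (inferInstance : SigmaFinite μ)
  have h2 : (volume : Measure (Fin N → Z)) = (Measure.pi fun _ : Fin N => μ) := by
    rw [MeasureTheory.volume_pi]; rfl
  rw [← h2]
  exact MeasureTheory.integral_fintype_prod_eq_prod (𝕜 := ℝ) (ι := Fin N) (E := fun _ => Z) u (μ := fun _ => μ)

lemma integral_eval {N : ℕ} (u : Z → ℝ) (i : Fin N) :
    ∫ z : Fin N → Z, u (z i) ∂(Measure.pi fun _ => μ) = ∫ x, u x ∂μ := by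
  classical
  calc ∫ z : Fin N → Z, u (z i) ∂(Measure.pi fun _ => μ)
      = ∫ z : Fin N → Z, ∏ k, (if k = i then u else fun _ => (1:ℝ)) (z k)
          ∂(Measure.pi fun _ => μ) := by
        congr 1; funext z
        rw [Finset.prod_eq_single_of_mem i (Finset.mem_univ i) (fun k _ hk => by simp [hk])]
        simp
    _ = ∏ k, ∫ x, (if k = i then u else fun _ => (1:ℝ)) x ∂μ := integral_pi_prod μ _
    _ = ∫ x, u x ∂μ := by
        rw [Finset.prod_eq_single_of_mem i (Finset.mem_univ i) (fun k _ hk => by simp [hk])]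
        simp

lemma integral_eval_two {N : ℕ} (u : Z → ℝ) {i j : Fin N} (hij : i ≠ j) :
    ∫ z : Fin N → Z, u (z i) * u (z j) ∂(Measure.pi fun _ => μ)
      = (∫ x, u x ∂μ) * (∫ x, u x ∂μ) := by
  classical
  have hmem : ∀ (k : Fin N), k ∉ ({i, j} : Finset (Fin N)) → k ≠ i ∧ k ≠ j := by
    intro k hk
    simp only [Finset.mem_insert, Finset.mem_singleton, not_or] at hk
    exact hk
  calc ∫ z : Fin N → Z, u (z i) * u (z j) ∂(Measure.pi fun _ => μ)
      = ∫ z : Fin N → Z, ∏ k, (if k = i ∨ k = j then u else fun _ => (1:ℝ)) (z k)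
          ∂(Measure.pi fun _ => μ) := by
        congr 1; funext z
        rw [← Finset.prod_subset (Finset.subset_univ ({i, j} : Finset (Fin N)))
          (fun k _ hk => by simp [(hmem k hk).1, (hmem k hk).2])]
        rw [Finset.prod_pair hij]
        simp [hij]
    _ = ∏ k, ∫ x, (if k = i ∨ k = j then u else fun _ => (1:ℝ)) x ∂μ := integral_pi_prod μ _
    _ = (∫ x, u x ∂μ) * (∫ x, u x ∂μ) := by
        rw [← Finset.prod_subset (Finset.subset_univ ({i, j} : Finset (Fin N)))
          (fun k _ hk => by simp [(hmem k hk).1, (hmem k hk).2])]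
        rw [Finset.prod_pair hij]
        simp [hij]

end Aux

section Aux2

variable (μ : Measure Z) [IsProbabilityMeasure μ] {f : ι → Z → ℝ}
variable (hmeas : ∀ g, Measurable (f g)) (hbound : ∀ g x, f g x ∈ Set.Icc (0 : ℝ) 1)
include hmeas hbound

omit hmeas hbound in
lemma measurable_empLoss' {N : ℕ} (hmeas : ∀ g, Measurable (f g)) (g : ι) :
    Measurable fun z : Fin N → Z => empLoss f N g z := by
  unfold empLoss
  exact measurable_const.mul
    (Finset.measurable_sum _ (fun i _ => (hmeas g).comp (measurable_pi_apply i)))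

omit hmeas hbound in
lemma abs_f_le (hbound : ∀ g x, f g x ∈ Set.Icc (0 : ℝ) 1) (g : ι) (x : Z) : |f g x| ≤ 1 := by
  have := hbound g x
  rw [abs_le]; constructor <;> [linarith [this.1]; exact this.2]

omit hmeas hbound in
lemma abs_empLoss_le (hbound : ∀ g x, f g x ∈ Set.Icc (0 : ℝ) 1) {N : ℕ} (g : ι)
    (z : Fin N → Z) : |empLoss f N g z| ≤ 1 :=
  avg_abs_le _ zero_le_one (fun i => abs_f_le hbound g (z i))

omit hmeas hbound in
lemma empLoss_nonneg (hbound : ∀ g x, f g x ∈ Set.Icc (0 : ℝ) 1) {N : ℕ} (g : ι)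
    (z : Fin N → Z) : 0 ≤ empLoss f N g z := by
  unfold empLoss
  exact mul_nonneg (by positivity) (Finset.sum_nonneg (fun i _ => (hbound g (z i)).1))

lemma expLoss_mem (g : ι) : expLoss μ f g ∈ Set.Icc (0:ℝ) 1 := by
  constructor
  · exact integral_nonneg (fun x => (hbound g x).1)
  · calc ∫ x, f g x ∂μ ≤ ∫ _x, (1:ℝ) ∂μ :=
        integral_mono (integrable_of_bound μ (hmeas g) 1 (abs_f_le hbound g))
          (integrable_const 1) (fun x => (hbound g x).2)
      _ = 1 := by simp

lemma abs_expLoss_le (g : ι) : |expLoss μ f g| ≤ 1 := by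
  have := expLoss_mem μ hmeas hbound g
  rw [abs_le]; constructor <;> [linarith [this.1]; exact this.2]

lemma integrable_f (g : ι) : Integrable (f g) μ :=
  integrable_of_bound μ (hmeas g) 1 (abs_f_le hbound g)

lemma integral_empLoss {N : ℕ} (hN : 0 < N) (g : ι) :
    ∫ z : Fin N → Z, empLoss f N g z ∂(Measure.pi fun _ => μ) = expLoss μ f g := by
  unfold empLoss
  rw [MeasureTheory.integral_const_mul]
  rw [integral_finset_sum (f := fun (i : Fin N) (z : Fin N → Z) => f g (z i)) Finset.univ
    (fun i _ => integrable_of_bound _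
    ((hmeas g).comp (measurable_pi_apply i)) 1 (fun z => abs_f_le hbound g (z i)))]
  have : ∀ i : Fin N, ∫ z : Fin N → Z, f g (z i) ∂(Measure.pi fun _ => μ) = expLoss μ f g :=
    fun i => integral_eval μ (f g) i
  rw [Finset.sum_congr rfl (fun i _ => this i), Finset.sum_const, Finset.card_univ,
    Fintype.card_fin, nsmul_eq_mul]
  have hN' : (N:ℝ) ≠ 0 := by exact_mod_cast hN.ne'
  field_simp

lemma variance_bound {N : ℕ} (hN : 0 < N) (g : ι) :
    ∫ z : Fin N → Z, (empLoss f N g z - expLoss μ f g)^2 ∂(Measure.pi fun _ => μ)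
      ≤ 1 / N := by
  classical
  set m := expLoss μ f g with hm
  set v : Z → ℝ := fun x => f g x - m with hv
  have hvm : Measurable v := (hmeas g).sub measurable_const
  have hvb : ∀ x, |v x| ≤ 1 := by
    intro x
    have h1 := hbound g x
    have h2 := expLoss_mem μ hmeas hbound g
    rw [abs_le]
    constructor
    · simp only [hv]; linarith [h1.1, h2.2]
    · simp only [hv]; linarith [h1.2, h2.1]
  have hv0 : ∫ x, v x ∂μ = 0 := by
    rw [integral_sub (integrable_f μ hmeas hbound g) (integrable_const m)]
    simp [hm, expLoss]
  have hintij : ∀ i j : Fin N, Integrable (fun z : Fin N → Z => v (z i) * v (z j))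
      (Measure.pi fun _ => μ) := by
    intro i j
    apply integrable_of_bound _ ((hvm.comp (measurable_pi_apply i)).mul
      (hvm.comp (measurable_pi_apply j))) 1
    intro z
    show |v (z i) * v (z j)| ≤ 1
    rw [abs_mul]
    exact mul_le_one₀ (hvb (z i)) (abs_nonneg _) (hvb (z j))
  have hrw : ∀ z : Fin N → Z, (empLoss f N g z - m)^2
      = (1/(N:ℝ))^2 * ∑ i, ∑ j, v (z i) * v (z j) := by
    intro z
    have h1 : empLoss f N g z - m = (1/(N:ℝ)) * ∑ i, v (z i) := by
      have hN' : (N:ℝ) ≠ 0 := by exact_mod_cast hN.ne'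
      simp only [hv, empLoss, Finset.sum_sub_distrib, Finset.sum_const, Finset.card_univ,
        Fintype.card_fin, nsmul_eq_mul, mul_sub]
      field_simp
    rw [h1, mul_pow, sq (∑ i, v (z i)), Finset.sum_mul_sum]
  have hswap : (∫ z : Fin N → Z, ∑ i, ∑ j, v (z i) * v (z j) ∂(Measure.pi fun _ => μ))
      = ∑ i : Fin N, ∑ j : Fin N, ∫ z : Fin N → Z, v (z i) * v (z j)
          ∂(Measure.pi fun _ => μ) := by
    rw [integral_finset_sum (f := fun (i : Fin N) (z : Fin N → Z) => ∑ j, v (z i) * v (z j))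
      Finset.univ (fun i _ => integrable_finset_sum _ (fun j _ => hintij i j))]
    exact Finset.sum_congr rfl (fun i _ => integral_finset_sum Finset.univ
      (fun j _ => hintij i j))
  calc ∫ z : Fin N → Z, (empLoss f N g z - m)^2 ∂(Measure.pi fun _ => μ)
      = (1/(N:ℝ))^2 * ∑ i : Fin N, ∑ j : Fin N, ∫ z : Fin N → Z, v (z i) * v (z j)
          ∂(Measure.pi fun _ => μ) := by
        rw [MeasureTheory.integral_congr_ae (ae_of_all _ hrw), MeasureTheory.integral_const_mul,
          hswap]
    _ ≤ (1/(N:ℝ))^2 * ∑ _i : Fin N, (1:ℝ) := by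
        apply mul_le_mul_of_nonneg_left _ (by positivity)
        apply Finset.sum_le_sum
        intro i _
        have hthis : ∀ j ∈ Finset.univ, (∫ z : Fin N → Z, v (z i) * v (z j)
            ∂(Measure.pi fun _ => μ)) = if i = j then ∫ x, (v x)^2 ∂μ else 0 := by
          intro j _
          by_cases hij : i = j
          · subst hij
            simp only [if_pos rfl]
            rw [← integral_eval μ (fun x => (v x)^2) i]
            congr 1; funext z; ring
          · rw [if_neg hij, integral_eval_two μ v hij, hv0, mul_zero]
        rw [Finset.sum_congr rfl hthis, Finset.sum_ite_eq Finset.univ i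
          (fun _ => ∫ x, (v x)^2 ∂μ), if_pos (Finset.mem_univ i)]
        have hsq : ∀ x, (v x)^2 ≤ 1 := by
          intro x
          calc (v x)^2 = |v x|^2 := (sq_abs _).symm
            _ ≤ 1^2 := pow_le_pow_left₀ (abs_nonneg _) (hvb x) 2
            _ = 1 := one_pow 2
        calc ∫ x, (v x)^2 ∂μ ≤ ∫ _x, (1:ℝ) ∂μ :=
              integral_mono (integrable_of_bound _ (hvm.pow_const 2) 1
                (fun x => by rw [abs_of_nonneg (sq_nonneg _)]; exact hsq x))
                (integrable_const 1) hsq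
          _ = 1 := by simp
    _ ≤ 1 / N := by
        have hN' : (0:ℝ) < N := by exact_mod_cast hN
        rw [Finset.sum_const, Finset.card_univ, Fintype.card_fin, nsmul_eq_mul, mul_one]
        rw [div_pow, one_pow, sq, div_mul_eq_mul_div, one_mul,
          div_le_div_iff₀ (by positivity) hN']
        nlinarith

end Aux2

lemma markov {α : Type*} [MeasurableSpace α] (P : Measure α) [IsProbabilityMeasure P]
    {h : α → ℝ} (hm : Measurable h) (c : ℝ) (hb : ∀ x, |h x| ≤ c)
    (h0 : ∀ x, 0 ≤ h x) {t : ℝ} (ht : 0 < t) :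
    P {x | t ≤ h x} ≤ ENNReal.ofReal ((∫ x, h x ∂P) / t) := by
  have hint : Integrable h P := integrable_of_bound P hm c hb
  have key := mul_meas_ge_le_integral_of_nonneg (ae_of_all _ h0) hint t
  have hfin : P {x | t ≤ h x} ≠ ⊤ := measure_ne_top _ _
  rw [← ENNReal.ofReal_toReal hfin]
  apply ENNReal.ofReal_le_ofReal
  rw [le_div_iff₀ ht]
  rw [measureReal_def] at key
  nlinarith [key]

lemma integral_comp_mp {α γ : Type*} [MeasurableSpace α] [MeasurableSpace γ]
    {m₁ : Measure α} {m₂ : Measure γ} {T : α → γ} (h : MeasurePreserving T m₁ m₂)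
    {u : γ → ℝ} (hu : Measurable u) : ∫ x, u (T x) ∂m₁ = ∫ y, u y ∂m₂ := by
  rw [← h.map_eq, integral_map h.measurable.aemeasurable hu.aestronglyMeasurable]

section Sym

variable (μ : Measure Z) [IsProbabilityMeasure μ] [Countable ι] [Nonempty ι] {f : ι → Z → ℝ}

lemma expected_sup_le (hmeas : ∀ g, Measurable (f g))
    (hbound : ∀ g x, f g x ∈ Set.Icc (0 : ℝ) 1) {N : ℕ} (hN : 0 < N) :
    ∫ z : Fin N → Z, (⨆ g, (expLoss μ f g - empLoss f N g z)) ∂(Measure.pi fun _ => μ)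
      ≤ 2 * radComplexity μ f N := by
  classical
  set ν : Measure (Fin N → Z) := Measure.pi fun _ => μ with hν
  set β : Measure (Fin N → Bool) := Measure.pi fun _ => coinFlip with hβ
  haveI : IsProbabilityMeasure ν := by rw [hν]; infer_instance
  haveI : IsProbabilityMeasure β := by rw [hβ]; infer_instance
  set G : (Fin N → Z) × (Fin N → Z) → ℝ :=
    fun p => ⨆ g, (empLoss f N g p.2 - empLoss f N g p.1) with hG
  set R : (Fin N → Z) × (Fin N → Bool) → ℝ :=
    fun p => ⨆ g : ι, (1 / N : ℝ) * ∑ i, rsign (p.2 i) * f g (p.1 i) with hR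
  set R2 : (Fin N → Z) × (Fin N → Bool) → ℝ :=
    fun p => ⨆ g : ι, (1 / N : ℝ) * ∑ i, (-rsign (p.2 i)) * f g (p.1 i) with hR2
  set K : (Fin N → Bool) × ((Fin N → Z) × (Fin N → Z)) → ℝ :=
    fun q => ⨆ g, (1 / N : ℝ) * ∑ i, rsign (q.1 i) * (f g (q.2.2 i) - f g (q.2.1 i)) with hK
  -- measurability
  have mG : Measurable G := Measurable.iSup fun g =>
    ((measurable_empLoss' hmeas g).comp measurable_snd).sub
      ((measurable_empLoss' hmeas g).comp measurable_fst)
  have mR : Measurable R := Measurable.iSup fun g => measurable_const.mul <|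
    Finset.measurable_sum _ fun i _ =>
      (measurable_rsign.comp ((measurable_pi_apply i).comp measurable_snd)).mul
        ((hmeas g).comp ((measurable_pi_apply i).comp measurable_fst))
  have mR2 : Measurable R2 := Measurable.iSup fun g => measurable_const.mul <|
    Finset.measurable_sum _ fun i _ =>
      ((measurable_rsign.comp ((measurable_pi_apply i).comp measurable_snd)).neg).mul
        ((hmeas g).comp ((measurable_pi_apply i).comp measurable_fst))
  have mK : Measurable K := Measurable.iSup fun g => measurable_const.mul <|
    Finset.measurable_sum _ fun i _ =>
      (measurable_rsign.comp ((measurable_pi_apply i).comp measurable_fst)).mul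
        (((hmeas g).comp ((measurable_pi_apply i).comp
            (measurable_snd.comp measurable_snd))).sub
          ((hmeas g).comp ((measurable_pi_apply i).comp
            (measurable_fst.comp measurable_snd))))
  -- bounds
  have bGg : ∀ p : (Fin N → Z) × (Fin N → Z), ∀ g : ι,
      |empLoss f N g p.2 - empLoss f N g p.1| ≤ 2 := by
    intro p g
    calc |empLoss f N g p.2 - empLoss f N g p.1|
        ≤ |empLoss f N g p.2| + |empLoss f N g p.1| := abs_sub _ _
      _ ≤ 2 := by linarith [abs_empLoss_le hbound g p.1, abs_empLoss_le hbound g p.2]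
  have bG : ∀ p, |G p| ≤ 2 := fun p => abs_ciSup_le (bGg p)
  have bRg : ∀ p : (Fin N → Z) × (Fin N → Bool), ∀ g : ι,
      |(1 / N : ℝ) * ∑ i, rsign (p.2 i) * f g (p.1 i)| ≤ 1 := fun p g =>
    avg_abs_le _ zero_le_one fun i => by
      rw [abs_mul, abs_rsign, one_mul]; exact abs_f_le hbound g _
  have bR : ∀ p, |R p| ≤ 1 := fun p => abs_ciSup_le (bRg p)
  have bR2g : ∀ p : (Fin N → Z) × (Fin N → Bool), ∀ g : ι,
      |(1 / N : ℝ) * ∑ i, (-rsign (p.2 i)) * f g (p.1 i)| ≤ 1 := fun p g =>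
    avg_abs_le _ zero_le_one fun i => by
      rw [abs_mul, abs_neg, abs_rsign, one_mul]; exact abs_f_le hbound g _
  have bR2 : ∀ p, |R2 p| ≤ 1 := fun p => abs_ciSup_le (bR2g p)
  have bKg : ∀ q : (Fin N → Bool) × ((Fin N → Z) × (Fin N → Z)), ∀ g : ι,
      |(1 / N : ℝ) * ∑ i, rsign (q.1 i) * (f g (q.2.2 i) - f g (q.2.1 i))| ≤ 2 := fun q g =>
    avg_abs_le _ (by norm_num) fun i => by
      rw [abs_mul, abs_rsign, one_mul]
      calc |f g (q.2.2 i) - f g (q.2.1 i)| ≤ |f g (q.2.2 i)| + |f g (q.2.1 i)| := abs_sub _ _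
        _ ≤ 2 := by linarith [abs_f_le hbound g (q.2.2 i), abs_f_le hbound g (q.2.1 i)]
  have bK : ∀ q, |K q| ≤ 2 := fun q => abs_ciSup_le (bKg q)
  -- bddAbove facts
  have bddG : ∀ p : (Fin N → Z) × (Fin N → Z),
      BddAbove (Set.range fun g : ι => empLoss f N g p.2 - empLoss f N g p.1) :=
    fun p => bddAbove_of_le fun g => (abs_le.1 (bGg p g)).2
  have bddR : ∀ p : (Fin N → Z) × (Fin N → Bool),
      BddAbove (Set.range fun g : ι => (1 / N : ℝ) * ∑ i, rsign (p.2 i) * f g (p.1 i)) :=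
    fun p => bddAbove_of_le fun g => (abs_le.1 (bRg p g)).2
  have bddR2 : ∀ p : (Fin N → Z) × (Fin N → Bool),
      BddAbove (Set.range fun g : ι => (1 / N : ℝ) * ∑ i, (-rsign (p.2 i)) * f g (p.1 i)) :=
    fun p => bddAbove_of_le fun g => (abs_le.1 (bR2g p g)).2
  -- integrabilities
  have intG : Integrable G (ν.prod ν) := integrable_of_bound _ mG 2 bG
  have intK : Integrable K (β.prod (ν.prod ν)) := integrable_of_bound _ mK 2 bK
  -- step 1
  have step1 : ∀ z, (⨆ g, (expLoss μ f g - empLoss f N g z)) ≤ ∫ z', G (z, z') ∂ν := by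
    intro z
    apply ciSup_le
    intro g
    have h1 : expLoss μ f g - empLoss f N g z
        = ∫ z', (empLoss f N g z' - empLoss f N g z) ∂ν := by
      rw [integral_sub (integrable_of_bound _ (measurable_empLoss' hmeas g) 1
        (fun z' => abs_empLoss_le hbound g z')) (integrable_const _),
        hν, integral_empLoss μ hmeas hbound hN g, integral_const]
      simp
    rw [h1]
    apply integral_mono
    · exact (integrable_of_bound _ (measurable_empLoss' hmeas g) 1
        (fun z' => abs_empLoss_le hbound g z')).sub (integrable_const _)
    · exact integrable_of_bound _ (mG.comp measurable_prodMk_left) 2 (fun z' => bG (z, z'))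
    · exact fun z' => le_ciSup (bddG (z, z')) g
  -- step 2 : Fubini
  have step2 : ∫ z, (∫ z', G (z, z') ∂ν) ∂ν = ∫ p, G p ∂(ν.prod ν) :=
    (integral_prod _ intG).symm
  -- step 3 : for each sign vector, swapping is measure preserving
  have stepT : ∀ ξ : Fin N → Bool,
      ∫ p, G p ∂(ν.prod ν) = ∫ p, K (ξ, p) ∂(ν.prod ν) := by
    intro ξ
    set s : Fin N → Z × Z → Z × Z := fun i q => if ξ i then q else Prod.swap q with hs
    have hsi : ∀ i, MeasurePreserving (s i) (μ.prod μ) (μ.prod μ) := by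
      intro i
      by_cases h : ξ i
      · simp [hs, h]; exact MeasurePreserving.id (μ.prod μ)
      · simpa [hs, h] using Measure.measurePreserving_swap (μ := μ) (ν := μ)
    have hS : MeasurePreserving (fun (a : Fin N → Z × Z) i => s i (a i))
        (Measure.pi fun _ => μ.prod μ) (Measure.pi fun _ => μ.prod μ) :=
      measurePreserving_pi _ _ hsi
    have he : MeasurePreserving (MeasurableEquiv.arrowProdEquivProdArrow Z Z (Fin N))
        (Measure.pi fun _ => μ.prod μ) (ν.prod ν) :=
      measurePreserving_arrowProdEquivProdArrow Z Z (Fin N) (fun _ => μ) (fun _ => μ)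
    set T : (Fin N → Z) × (Fin N → Z) → (Fin N → Z) × (Fin N → Z) :=
      (MeasurableEquiv.arrowProdEquivProdArrow Z Z (Fin N)) ∘ (fun a i => s i (a i)) ∘
        (MeasurableEquiv.arrowProdEquivProdArrow Z Z (Fin N)).symm with hT
    have hTmp : MeasurePreserving T (ν.prod ν) (ν.prod ν) :=
      he.comp (hS.comp (MeasurePreserving.symm _ he))
    have hT1 : ∀ p (i : Fin N), (T p).1 i = (if ξ i then p.1 i else p.2 i) := by
      intro p i
      by_cases h : ξ i <;>
        simp [hT, hs, h, MeasurableEquiv.arrowProdEquivProdArrow,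
          Equiv.arrowProdEquivProdArrow]
    have hT2 : ∀ p (i : Fin N), (T p).2 i = (if ξ i then p.2 i else p.1 i) := by
      intro p i
      by_cases h : ξ i <;>
        simp [hT, hs, h, MeasurableEquiv.arrowProdEquivProdArrow,
          Equiv.arrowProdEquivProdArrow]
    calc ∫ p, G p ∂(ν.prod ν) = ∫ p, G (T p) ∂(ν.prod ν) := (integral_comp_mp hTmp mG).symm
      _ = ∫ p, K (ξ, p) ∂(ν.prod ν) := by
          apply integral_congr_ae (ae_of_all _ _)
          intro p
          show G (T p) = K (ξ, p)
          simp only [hG, hK]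
          apply iSup_congr
          intro g
          have hterm : ∀ i : Fin N, f g ((T p).2 i) - f g ((T p).1 i)
              = rsign (ξ i) * (f g (p.2 i) - f g (p.1 i)) := by
            intro i
            rw [hT1 p i, hT2 p i]
            by_cases h : ξ i <;> simp [h, rsign] <;> ring
          unfold empLoss
          rw [← mul_sub, ← Finset.sum_sub_distrib]
          congr 1
          exact Finset.sum_congr rfl fun i _ => hterm i
  -- step 4 : average over sign vectors
  have step4 : ∫ p, G p ∂(ν.prod ν) = ∫ q, K q ∂(β.prod (ν.prod ν)) := by
    have h1 : ∫ ξ, (∫ p, K (ξ, p) ∂(ν.prod ν)) ∂β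
        = ∫ ξ, (∫ p, G p ∂(ν.prod ν)) ∂β :=
      integral_congr_ae (ae_of_all _ fun ξ => (stepT ξ).symm)
    rw [integral_prod _ intK, h1, integral_const]
    simp
  -- step 5 : split the supremum
  have hKle : ∀ q : (Fin N → Bool) × ((Fin N → Z) × (Fin N → Z)),
      K q ≤ R (q.2.2, q.1) + R2 (q.2.1, q.1) := by
    intro q
    apply ciSup_le
    intro g
    have h1 : (1/(N:ℝ)) * ∑ i, rsign (q.1 i) * (f g (q.2.2 i) - f g (q.2.1 i))
        = (1/(N:ℝ)) * ∑ i, rsign (q.1 i) * f g (q.2.2 i)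
          + (1/(N:ℝ)) * ∑ i, (-rsign (q.1 i)) * f g (q.2.1 i) := by
      rw [← mul_add, ← Finset.sum_add_distrib]
      congr 1
      exact Finset.sum_congr rfl fun i _ => by ring
    rw [h1]
    exact add_le_add (le_ciSup (bddR (q.2.2, q.1)) g) (le_ciSup (bddR2 (q.2.1, q.1)) g)
  have mRA : Measurable fun q : (Fin N → Bool) × ((Fin N → Z) × (Fin N → Z)) =>
      R (q.2.2, q.1) :=
    mR.comp ((measurable_snd.comp measurable_snd).prodMk measurable_fst)
  have mRB : Measurable fun q : (Fin N → Bool) × ((Fin N → Z) × (Fin N → Z)) =>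
      R2 (q.2.1, q.1) :=
    mR2.comp ((measurable_fst.comp measurable_snd).prodMk measurable_fst)
  have intRA : Integrable (fun q : (Fin N → Bool) × ((Fin N → Z) × (Fin N → Z)) =>
      R (q.2.2, q.1)) (β.prod (ν.prod ν)) :=
    integrable_of_bound _ mRA 1 (fun q => bR _)
  have intRB : Integrable (fun q : (Fin N → Bool) × ((Fin N → Z) × (Fin N → Z)) =>
      R2 (q.2.1, q.1)) (β.prod (ν.prod ν)) :=
    integrable_of_bound _ mRB 1 (fun q => bR2 _)
  have step5 : ∫ q, K q ∂(β.prod (ν.prod ν))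
      ≤ (∫ q, R (q.2.2, q.1) ∂(β.prod (ν.prod ν)))
        + ∫ q, R2 (q.2.1, q.1) ∂(β.prod (ν.prod ν)) := by
    calc ∫ q, K q ∂(β.prod (ν.prod ν))
        ≤ ∫ q, (R (q.2.2, q.1) + R2 (q.2.1, q.1)) ∂(β.prod (ν.prod ν)) :=
          integral_mono intK (intRA.add intRB) hKle
      _ = _ := integral_add intRA intRB
  -- step 6 : identify both integrals with the Rademacher complexity
  have hmpsnd : MeasurePreserving (Prod.snd : (Fin N → Z) × (Fin N → Z) → (Fin N → Z)) 
      (ν.prod ν) ν :=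
    ⟨measurable_snd, by rw [Measure.map_snd_prod, measure_univ, one_smul]⟩
  have hmpfst : MeasurePreserving (Prod.fst : (Fin N → Z) × (Fin N → Z) → (Fin N → Z)) 
      (ν.prod ν) ν :=
    ⟨measurable_fst, by rw [Measure.map_fst_prod, measure_univ, one_smul]⟩
  have hmpA : MeasurePreserving
      (fun q : (Fin N → Bool) × ((Fin N → Z) × (Fin N → Z)) => (q.2.2, q.1))
      (β.prod (ν.prod ν)) (ν.prod β) := by
    have h1 : MeasurePreserving (Prod.map (id : (Fin N → Bool) → (Fin N → Bool)) Prod.snd)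
        (β.prod (ν.prod ν)) (β.prod ν) := (MeasurePreserving.id β).prod hmpsnd
    exact (Measure.measurePreserving_swap).comp h1
  have hmpB : MeasurePreserving
      (fun q : (Fin N → Bool) × ((Fin N → Z) × (Fin N → Z)) => (q.2.1, q.1))
      (β.prod (ν.prod ν)) (ν.prod β) := by
    have h1 : MeasurePreserving (Prod.map (id : (Fin N → Bool) → (Fin N → Bool)) Prod.fst)
        (β.prod (ν.prod ν)) (β.prod ν) := (MeasurePreserving.id β).prod hmpfst
    exact (Measure.measurePreserving_swap).comp h1
  have hA : ∫ q, R (q.2.2, q.1) ∂(β.prod (ν.prod ν)) = radComplexity μ f N := by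
    rw [integral_comp_mp hmpA mR]
    rw [hR, hν, hβ]
    rfl
  have hB : ∫ q, R2 (q.2.1, q.1) ∂(β.prod (ν.prod ν)) = radComplexity μ f N := by
    rw [integral_comp_mp hmpB mR2]
    have hmpNeg : MeasurePreserving
        (Prod.map (id : (Fin N → Z) → (Fin N → Z)) (fun ξ : Fin N → Bool => fun i => !ξ i))
        (ν.prod β) (ν.prod β) :=
      (MeasurePreserving.id ν).prod (measurePreserving_pi _ _ (fun _ => coinFlip_not))
    have hpt : ∀ p : (Fin N → Z) × (Fin N → Bool), R2 p = R (p.1, fun i => !p.2 i) := by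
      intro p
      simp only [hR, hR2]
      apply iSup_congr
      intro g
      congr 1
      exact Finset.sum_congr rfl fun i _ => by rw [rsign_not]
    rw [integral_congr_ae (ae_of_all _ hpt)]
    have h2 : ∫ a : (Fin N → Z) × (Fin N → Bool), R (a.1, fun i => !a.2 i) ∂(ν.prod β)
        = ∫ y, R y ∂(ν.prod β) := by
      have := integral_comp_mp hmpNeg mR
      simpa [Prod.map] using this
    rw [h2, hR, hν, hβ]
    rfl
  -- assemble
  calc ∫ z, (⨆ g, (expLoss μ f g - empLoss f N g z)) ∂ν
      ≤ ∫ z, (∫ z', G (z, z') ∂ν) ∂ν := by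
        apply integral_mono
        · exact integrable_of_bound _ (Measurable.iSup fun g =>
            measurable_const.sub (measurable_empLoss' hmeas g)) 2
            (fun z => abs_ciSup_le fun g => by
              calc |expLoss μ f g - empLoss f N g z|
                  ≤ |expLoss μ f g| + |empLoss f N g z| := abs_sub _ _
                _ ≤ 2 := by linarith [abs_expLoss_le μ hmeas hbound g,
                    abs_empLoss_le hbound g z])
        · exact integrable_of_bound _ (mG.stronglyMeasurable.integral_prod_right').measurable 2 (fun z => by
            have := norm_integral_le_of_norm_le_const (μ := ν)
              (f := fun z' => G (z, z')) (C := 2) (ae_of_all _ fun z' => by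
                simpa using bG (z, z'))
            simpa using this)
        · exact step1
    _ = ∫ p, G p ∂(ν.prod ν) := step2
    _ = ∫ q, K q ∂(β.prod (ν.prod ν)) := step4
    _ ≤ (∫ q, R (q.2.2, q.1) ∂(β.prod (ν.prod ν)))
        + ∫ q, R2 (q.2.1, q.1) ∂(β.prod (ν.prod ν)) := step5
    _ = 2 * radComplexity μ f N := by rw [hA, hB]; ring

end Sym


set_option maxHeartbeats 2000000 in
/-- **Consistency of ERM** (consequence of Theorem 1): if the Rademacher complexities satisfy
`C(N) → 0` and `Ĝ_N` is an `ε_N`-approximate empirical risk minimizer on an i.i.d. sample of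
size `N` with `ε_N → 0`, then for every `δ ∈ (0,1)` and every `ρ > 0` there exists `N₀` such
that for all `N ≥ N₀`, with probability at least `1 - δ`,
`L(Ĝ_N) - inf_{g ∈ ι} L(g) ≤ ρ`. -/
theorem erm_consistency
    (μ : Measure Z) [IsProbabilityMeasure μ] [Countable ι] [Nonempty ι]
    (f : ι → Z → ℝ) (hmeas : ∀ g, Measurable (f g))
    (hbound : ∀ g x, f g x ∈ Set.Icc (0 : ℝ) 1)
    (hC : Filter.Tendsto (fun N => radComplexity μ f N) Filter.atTop (nhds 0))
    (ε : ℕ → ℝ) (hεnonneg : ∀ N, 0 ≤ ε N)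
    (hε : Filter.Tendsto ε Filter.atTop (nhds 0))
    (Ghat : (N : ℕ) → (Fin N → Z) → ι)
    (hERM : ∀ N (z : Fin N → Z),
      empLoss f N (Ghat N z) z ≤ (⨅ g : ι, empLoss f N g z) + ε N)
    (δ : ℝ) (hδ : δ ∈ Set.Ioo (0 : ℝ) 1) (ρ : ℝ) (hρ : 0 < ρ) :
    ∃ N₀ : ℕ, ∀ N ≥ N₀,
      (Measure.pi fun _ : Fin N => μ)
        {z | expLoss μ f (Ghat N z) - (⨅ g : ι, expLoss μ f g) ≤ ρ}
        ≥ ENNReal.ofReal (1 - δ) := by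
    classical
  obtain ⟨hδ0, hδ1⟩ := hδ
  set t : ℝ := ρ / 4 with htdef
  have ht0 : 0 < t := by positivity
  set c : ℝ := t * δ / 2 with hcdef
  have hc0 : 0 < c := by positivity
  -- near optimal hypothesis
  have bddL : BddBelow (Set.range fun g : ι => expLoss μ f g) :=
    ⟨0, by rintro x ⟨g, rfl⟩; exact (expLoss_mem μ hmeas hbound g).1⟩
  set infL : ℝ := ⨅ g : ι, expLoss μ f g with hinfL
  obtain ⟨g₀, hg₀⟩ : ∃ g₀ : ι, expLoss μ f g₀ < infL + t :=
    exists_lt_of_ciInf_lt (lt_add_of_pos_right infL ht0)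
  -- the sequence of probability bounds
  set rseq : ℕ → ℝ := fun N =>
    (2 * radComplexity μ f N + (c / 2 + (1 / (2 * c)) * (1 / N))) / t + (1 / N) / t ^ 2
    with hrseq
  have hlim : Filter.Tendsto rseq Filter.atTop
      (nhds ((2 * 0 + (c / 2 + (1 / (2 * c)) * 0)) / t + 0 / t ^ 2)) := by
    apply Filter.Tendsto.add
    · apply Filter.Tendsto.div_const
      exact (hC.const_mul 2).add (Filter.Tendsto.add tendsto_const_nhds
        (tendsto_one_div_atTop_nhds_zero_nat.const_mul _))
    · exact tendsto_one_div_atTop_nhds_zero_nat.div_const _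
  have hlimval : (2 * 0 + (c / 2 + (1 / (2 * c)) * 0)) / t + 0 / t ^ 2 < δ := by
    have htne : t ≠ 0 := ht0.ne'
    have heq : (2 * 0 + (c / 2 + (1 / (2 * c)) * 0)) / t + 0 / t ^ 2 = δ / 4 := by
      rw [hcdef]
      field_simp
      ring
    rw [heq]
    linarith
  have hev : ∀ᶠ N : ℕ in Filter.atTop, rseq N < δ ∧ ε N < t ∧ 1 ≤ N := by
    refine Filter.Eventually.and (hlim.eventually_lt_const hlimval) ?_
    exact Filter.Eventually.and (hε.eventually_lt_const ht0) (Filter.eventually_ge_atTop 1)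
  obtain ⟨N₀, hN₀⟩ := Filter.eventually_atTop.mp hev
  refine ⟨N₀, fun N hN => ?_⟩
  obtain ⟨hNr, hNε, hN1⟩ := hN₀ N hN
  have hNpos : 0 < N := hN1
  set ν : Measure (Fin N → Z) := Measure.pi fun _ => μ with hν
  haveI : IsProbabilityMeasure ν := by rw [hν]; infer_instance
  -- the functions
  set F : (Fin N → Z) → ℝ := fun z => ⨆ g, (expLoss μ f g - empLoss f N g z) with hF
  set d : (Fin N → Z) → ℝ := fun z => empLoss f N g₀ z - expLoss μ f g₀ with hd
  set h₁ : (Fin N → Z) → ℝ := fun z => max (F z) 0 with hh₁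
  set h₂ : (Fin N → Z) → ℝ := fun z => (d z) ^ 2 with hh₂
  have bFg : ∀ z : Fin N → Z, ∀ g : ι, |expLoss μ f g - empLoss f N g z| ≤ 2 := by
    intro z g
    calc |expLoss μ f g - empLoss f N g z| ≤ |expLoss μ f g| + |empLoss f N g z| := abs_sub _ _
      _ ≤ 2 := by linarith [abs_expLoss_le μ hmeas hbound g, abs_empLoss_le hbound g z]
  have bddF : ∀ z : Fin N → Z,
      BddAbove (Set.range fun g : ι => expLoss μ f g - empLoss f N g z) :=
    fun z => bddAbove_of_le fun g => (abs_le.1 (bFg z g)).2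
  have bF : ∀ z, |F z| ≤ 2 := fun z => abs_ciSup_le (bFg z)
  have bd : ∀ z, |d z| ≤ 2 := by
    intro z
    calc |d z| ≤ |empLoss f N g₀ z| + |expLoss μ f g₀| := abs_sub _ _
      _ ≤ 2 := by linarith [abs_expLoss_le μ hmeas hbound g₀, abs_empLoss_le hbound g₀ z]
  have mF : Measurable F := Measurable.iSup fun g =>
    measurable_const.sub (measurable_empLoss' hmeas g)
  have md : Measurable d := (measurable_empLoss' hmeas g₀).sub measurable_const
  have m1 : Measurable h₁ := mF.max measurable_const
  have m2 : Measurable h₂ := md.pow_const 2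
  have b1 : ∀ z, |h₁ z| ≤ 2 := by
    intro z
    rw [abs_of_nonneg (le_max_right _ _)]
    exact max_le ((abs_le.1 (bF z)).2) (by norm_num)
  have b2 : ∀ z, |h₂ z| ≤ 4 := by
    intro z
    rw [hh₂, abs_of_nonneg (sq_nonneg _)]
    calc (d z)^2 = |d z|^2 := (sq_abs _).symm
      _ ≤ 2^2 := pow_le_pow_left₀ (abs_nonneg _) (bd z) 2
      _ = 4 := by norm_num
  -- expectations
  have int1 : Integrable h₁ ν := integrable_of_bound _ m1 2 b1
  have int2 : Integrable h₂ ν := integrable_of_bound _ m2 4 b2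
  have intF : Integrable F ν := integrable_of_bound _ mF 2 bF
  have hEF : ∫ z, F z ∂ν ≤ 2 * radComplexity μ f N := by
    rw [hν, hF]
    exact expected_sup_le μ hmeas hbound hNpos
  have hE2 : ∫ z, h₂ z ∂ν ≤ 1 / N := by
    rw [hν, hh₂, hd]
    exact variance_bound μ hmeas hbound hNpos g₀
  have hptwise : ∀ z, h₁ z ≤ F z + (c / 2 + (1 / (2 * c)) * h₂ z) := by
    intro z
    have hFd : -(d z) ≤ F z := by
      have h0 : expLoss μ f g₀ - empLoss f N g₀ z ≤ F z := le_ciSup (bddF z) g₀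
      have hdz : d z = empLoss f N g₀ z - expLoss μ f g₀ := rfl
      linarith
    have habs : |d z| ≤ c / 2 + (1 / (2 * c)) * (d z) ^ 2 := by
      have key : 2 * c * |d z| ≤ c * c + d z ^ 2 := by
        nlinarith [sq_nonneg (|d z| - c), sq_abs (d z)]
      have h2' : |d z| ≤ (c * c + d z ^ 2) / (2 * c) := by
        rw [le_div_iff₀ (by positivity)]
        linarith
      calc |d z| ≤ (c * c + d z ^ 2) / (2 * c) := h2'
        _ = c / 2 + (1 / (2 * c)) * d z ^ 2 := by field_simp
    apply max_le
    · have : 0 ≤ c / 2 + (1 / (2 * c)) * h₂ z := by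
        rw [hh₂]; positivity
      linarith
    · have h1 : -|d z| ≤ F z := le_trans (neg_le_neg (le_abs_self (d z))) hFd
      show (0:ℝ) ≤ F z + (c / 2 + (1 / (2 * c)) * h₂ z)
      have h2 : h₂ z = (d z) ^ 2 := rfl
      rw [h2]
      linarith
  have hE1 : ∫ z, h₁ z ∂ν ≤ 2 * radComplexity μ f N + (c / 2 + (1 / (2 * c)) * (1 / N)) := by
    have i3 : Integrable (fun z => (1 / (2 * c)) * h₂ z) ν := int2.const_mul _
    have i2 : Integrable (fun z => c / 2 + (1 / (2 * c)) * h₂ z) ν := (integrable_const _).add i3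
    have i1 : Integrable (fun z => F z + (c / 2 + (1 / (2 * c)) * h₂ z)) ν := intF.add i2
    have step : ∫ z, h₁ z ∂ν ≤ ∫ z, (F z + (c / 2 + (1 / (2 * c)) * h₂ z)) ∂ν :=
      integral_mono int1 i1 hptwise
    have expand : ∫ z, (F z + (c / 2 + (1 / (2 * c)) * h₂ z)) ∂ν
        = (∫ z, F z ∂ν) + (c / 2 + (1 / (2 * c)) * ∫ z, h₂ z ∂ν) := by
      rw [integral_add intF i2, integral_add (integrable_const _) i3, integral_const,
        MeasureTheory.integral_const_mul]
      simp
    have mono2 : (1 / (2 * c)) * ∫ z, h₂ z ∂ν ≤ (1 / (2 * c)) * (1 / N) :=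
      mul_le_mul_of_nonneg_left hE2 (by positivity)
    calc ∫ z, h₁ z ∂ν ≤ (∫ z, F z ∂ν) + (c / 2 + (1 / (2 * c)) * ∫ z, h₂ z ∂ν) :=
          step.trans_eq expand
      _ ≤ 2 * radComplexity μ f N + (c / 2 + (1 / (2 * c)) * (1 / N)) := by
          linarith [hEF, mono2]
  -- bad events
  set S₁ : Set (Fin N → Z) := {z | t ≤ h₁ z} with hS₁
  set S₂ : Set (Fin N → Z) := {z | t ^ 2 ≤ h₂ z} with hS₂
  have hS₁m : MeasurableSet S₁ := measurableSet_le measurable_const m1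
  have hS₂m : MeasurableSet S₂ := measurableSet_le measurable_const m2
  have hP₁ : ν S₁ ≤ ENNReal.ofReal ((∫ z, h₁ z ∂ν) / t) :=
    markov ν m1 2 b1 (fun z => le_max_right _ _) ht0
  have hP₂ : ν S₂ ≤ ENNReal.ofReal ((∫ z, h₂ z ∂ν) / t ^ 2) :=
    markov ν m2 4 b2 (fun z => sq_nonneg _) (by positivity)
  have hint1nn : 0 ≤ (∫ z, h₁ z ∂ν) / t :=
    div_nonneg (integral_nonneg fun z => le_max_right _ _) ht0.le
  have hint2nn : 0 ≤ (∫ z, h₂ z ∂ν) / t ^ 2 :=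
    div_nonneg (integral_nonneg fun z => sq_nonneg _) (by positivity)
  have hPbad : ν (S₁ ∪ S₂) ≤ ENNReal.ofReal δ := by
    calc ν (S₁ ∪ S₂) ≤ ν S₁ + ν S₂ := measure_union_le _ _
      _ ≤ ENNReal.ofReal ((∫ z, h₁ z ∂ν) / t) + ENNReal.ofReal ((∫ z, h₂ z ∂ν) / t ^ 2) :=
          add_le_add hP₁ hP₂
      _ = ENNReal.ofReal ((∫ z, h₁ z ∂ν) / t + (∫ z, h₂ z ∂ν) / t ^ 2) :=
          (ENNReal.ofReal_add hint1nn hint2nn).symm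
      _ ≤ ENNReal.ofReal δ := by
          apply ENNReal.ofReal_le_ofReal
          have key : (∫ z, h₁ z ∂ν) / t + (∫ z, h₂ z ∂ν) / t ^ 2
              ≤ (2 * radComplexity μ f N + (c / 2 + (1 / (2 * c)) * (1 / N))) / t
                + (1 / N) / t ^ 2 := by
            gcongr
          have hrN : (2 * radComplexity μ f N + (c / 2 + (1 / (2 * c)) * (1 / N))) / t
              + (1 / N) / t ^ 2 < δ := by
            have hrfl : rseq N = (2 * radComplexity μ f N + (c / 2 + (1 / (2 * c)) * (1 / N))) / t
              + (1 / N) / t ^ 2 := rfl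
            rw [← hrfl]
            exact hNr
          linarith
  -- the good event is contained in the target set
  have hsub : (S₁ ∪ S₂)ᶜ ⊆ {z | expLoss μ f (Ghat N z) - (⨅ g : ι, expLoss μ f g) ≤ ρ} := by
    intro z hz
    rw [Set.mem_compl_iff, Set.mem_union] at hz
    push_neg at hz
    obtain ⟨hz1, hz2⟩ := hz
    have hF_lt : F z < t := by
      have : h₁ z < t := lt_of_not_ge hz1
      exact lt_of_le_of_lt (le_max_left _ _) this
    have hd_lt : |d z| < t := by
      have h2 : h₂ z < t ^ 2 := lt_of_not_ge hz2
      have h2' : d z ^ 2 < t ^ 2 := h2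
      nlinarith [sq_abs (d z), abs_nonneg (d z), sq_nonneg (|d z| - t), sq_nonneg (|d z| + t)]
    have e1 : expLoss μ f (Ghat N z) - empLoss f N (Ghat N z) z ≤ F z :=
      le_ciSup (bddF z) (Ghat N z)
    have e2 : empLoss f N (Ghat N z) z ≤ (⨅ g : ι, empLoss f N g z) + ε N := hERM N z
    have e3 : (⨅ g : ι, empLoss f N g z) ≤ empLoss f N g₀ z :=
      ciInf_le ⟨0, by rintro x ⟨g, rfl⟩; exact empLoss_nonneg hbound g z⟩ g₀
    have e4 : empLoss f N g₀ z = expLoss μ f g₀ + d z := by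
      have : d z = empLoss f N g₀ z - expLoss μ f g₀ := rfl
      linarith
    have habs := abs_lt.1 hd_lt
    show expLoss μ f (Ghat N z) - infL ≤ ρ
    have : expLoss μ f (Ghat N z) ≤ infL + 4 * t := by
      linarith [e1, e2, e3, e4, hF_lt, habs.2, hNε, hg₀]
    have ht4 : 4 * t = ρ := by rw [htdef]; ring
    linarith
  -- conclude
  have hcompl : ENNReal.ofReal (1 - δ) ≤ ν (S₁ ∪ S₂)ᶜ := by
    rw [prob_compl_eq_one_sub (hS₁m.union hS₂m)]
    have h1 : ENNReal.ofReal (1 - δ) = 1 - ENNReal.ofReal δ := by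
      rw [ENNReal.ofReal_sub 1 hδ0.le, ENNReal.ofReal_one]
    rw [h1]
    exact tsub_le_tsub_left hPbad 1
  calc ENNReal.ofReal (1 - δ) ≤ ν (S₁ ∪ S₂)ᶜ := hcompl
    _ ≤ ν {z | expLoss μ f (Ghat N z) - (⨅ g : ι, expLoss μ f g) ≤ ρ} := measure_mono hsub
end
end
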